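/- Let m, n, N ≥ 1 be integers. Suppose there exist a real p ∈ (0,1) and nonnegative integers c ≤ m/2 and d ≤ n/2 such that p^(C(m,2) − c(c−1)) · (2N)^(m−c) + (1−p)^(C(n,2) − d(d−1)) · (2N)^(n−d) ≤ 1/2, where C(k,2) = k(k−1)/2. Then the online Ramsey number satisfies r̃(m,n) > N. -/

import Mathlib

open scoped Classical

namespace OnlineRamseyGame

/-- A valid Builder strategy: it never builds a loop, and along any play the
edges built are pairwise distinct. -/
def ValidBuilder {V : Type*} (B : List Bool → Sym2 V) : Prop :=
  (∀ h : List Bool, ¬ (B h).IsDiag) ∧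
  ∀ h : List Bool, ∀ i : ℕ, i < h.length → B (h.take i) ≠ B h

/-- The history of Painter's colors after `t` turns against Painter strategy `P`
(Builder's moves are determined by this history). -/
def histOf (P : List Bool → Bool) : ℕ → List Bool
  | 0 => []
  | t + 1 => histOf P t ++ [P (histOf P t)]

/-- The graph built by `edge` contains a monochromatic clique on `k` vertices in
color `col` within the first `N` turns. -/
def HasMonoClique {V : Type*} (edge : ℕ → Sym2 V) (color : ℕ → Bool)
    (N k : ℕ) (col : Bool) : Prop :=
  ∃ S : Finset V, S.card = k ∧
    ∀ u ∈ S, ∀ v ∈ S, u ≠ v → ∃ t, t < N ∧ edge t = s(u, v) ∧ color t = col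

/-- Builder has a valid strategy winning the `(m,n)` online Ramsey game within `N`
turns against every Painter strategy (red = `true`, blue = `false`). -/
def BuilderWins (m n N : ℕ) : Prop :=
  ∃ B : List Bool → Sym2 ℕ, ValidBuilder B ∧
    ∀ P : List Bool → Bool,
      HasMonoClique (fun t => B (histOf P t)) (fun t => P (histOf P t)) N m true ∨
      HasMonoClique (fun t => B (histOf P t)) (fun t => P (histOf P t)) N n false

/-- The online Ramsey number `r̃(m,n)`: the least `N` such that Builder can
guarantee a win within `N` turns. -/
noncomputable def onlineRamsey (m n : ℕ) : ℕ := sInf {N | BuilderWins m n N}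

noncomputable def wt (p : ℝ) {N : ℕ} (h : Fin N → Bool) : ℝ :=
  ∏ t, (if h t then p else 1 - p)

lemma wt_nonneg {p : ℝ} (hp0 : 0 ≤ p) (hp1 : p ≤ 1) {N : ℕ} (h : Fin N → Bool) :
    0 ≤ wt p h := by
  apply Finset.prod_nonneg
  intro t _
  by_cases hb : h t <;> simp [hb] <;> linarith

lemma wt_cons {p : ℝ} {N : ℕ} (b : Bool) (g : Fin N → Bool) :
    wt p (Fin.cons b g) = (if b then p else 1 - p) * wt p g := by
  rw [wt, Fin.prod_univ_succ]
  simp [wt]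

lemma sum_cons_decomp {N : ℕ} (F : (Fin (N+1) → Bool) → ℝ) :
    ∑ h : Fin (N+1) → Bool, F h = ∑ b : Bool, ∑ g : Fin N → Bool, F (Fin.cons b g) := by
  calc ∑ h : Fin (N+1) → Bool, F h
      = ∑ x : Bool × (Fin N → Bool), F (Fin.consEquiv (fun _ => Bool) x) :=
        ((Fin.consEquiv (fun _ => Bool)).sum_comp F).symm
    _ = ∑ b : Bool, ∑ g : Fin N → Bool, F (Fin.cons b g) := Fintype.sum_prod_type _

lemma sum_wt {p : ℝ} (N : ℕ) : ∑ h : Fin N → Bool, wt p h = 1 := by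
  induction N with
  | zero => simp [wt]
  | succ N ih =>
      rw [sum_cons_decomp (fun h => wt p h)]
      simp only [wt_cons, ← Finset.mul_sum, ih]
      simp


/-- Key martingale-type union bound: if `R h` is a "predictable" set of required
times (membership of `t` only depends on the history before `t`), then the total
weight of histories where all required bits have color `col` and there are at
least `k` required bits is at most `pc ^ k`. -/
lemma martingale {p : ℝ} (hp0 : 0 ≤ p) (hp1 : p ≤ 1) (col : Bool) :
    ∀ (N : ℕ) (k : ℕ) (R : (Fin N → Bool) → Finset (Fin N)),
    (∀ (g g' : Fin N → Bool) (t : Fin N), (∀ s, s < t → g s = g' s) → (t ∈ R g ↔ t ∈ R g')) →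
    ∑ h : Fin N → Bool, (if k ≤ (R h).card ∧ (∀ t ∈ R h, h t = col) then wt p h else 0)
      ≤ (if col then p else 1 - p) ^ k := by
  have hq0 : (0:ℝ) ≤ 1 - p := by linarith
  set pc : ℝ := if col then p else 1 - p with hpc
  have hpc0 : 0 ≤ pc := by cases col <;> simp [hpc] <;> linarith
  have hpc1 : pc ≤ 1 := by cases col <;> simp [hpc] <;> linarith
  intro N
  induction N with
  | zero =>
      intro k R hmeas
      have hR : ∀ h : Fin 0 → Bool, R h = ∅ := fun h => Finset.eq_empty_of_isEmpty _
      rcases Nat.eq_zero_or_pos k with hk | hk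
      · subst hk
        simp [hR, wt]
      · have : ∀ h : Fin 0 → Bool,
            (if k ≤ (R h).card ∧ (∀ t ∈ R h, h t = col) then wt p h else 0) = 0 := by
          intro h; rw [if_neg]; rw [hR]; simp; omega
        simp only [this]
        rw [Finset.sum_const, smul_zero]
        exact pow_nonneg hpc0 k
  | succ N ih =>
      intro k R hmeas
      -- membership of 0 is independent of the history
      have mem0 : ∀ g g' : Fin (N+1) → Bool, ((0 : Fin (N+1)) ∈ R g ↔ 0 ∈ R g') := by
        intro g g'
        exact hmeas g g' 0 (fun s hs => absurd hs (by simp [Fin.not_lt_zero]))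
      -- the shifted requirement sets
      set R' : Bool → (Fin N → Bool) → Finset (Fin N) :=
        fun b g => Finset.univ.filter (fun t => t.succ ∈ R (Fin.cons b g)) with hR'
      have hmeas' : ∀ b : Bool, ∀ (g g' : Fin N → Bool) (t : Fin N),
          (∀ s, s < t → g s = g' s) → (t ∈ R' b g ↔ t ∈ R' b g') := by
        intro b g g' t hagree
        simp only [hR', Finset.mem_filter, Finset.mem_univ, true_and]
        apply hmeas
        intro s hs
        obtain rfl | ⟨u, rfl⟩ := Fin.eq_zero_or_eq_succ s
        · simp
        · have hut : u < t := by rwa [Fin.succ_lt_succ_iff] at hs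
          simp [Fin.cons_succ, hagree u hut]
      -- cardinality decomposition
      have cardR : ∀ (b : Bool) (g : Fin N → Bool),
          (R (Fin.cons b g)).card
            = (if (0 : Fin (N+1)) ∈ R (Fin.cons b g) then 1 else 0) + (R' b g).card := by
        intro b g
        set A := R (Fin.cons b g)
        have himg : (R' b g).map ⟨Fin.succ, Fin.succ_injective N⟩
            = A.filter (fun x => x ≠ 0) := by
          ext x
          simp only [Finset.mem_map, Function.Embedding.coeFn_mk, Finset.mem_filter, hR',
            Finset.mem_filter, Finset.mem_univ, true_and]
          constructor
          · rintro ⟨u, hu, rfl⟩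
            exact ⟨hu, Fin.succ_ne_zero u⟩
          · rintro ⟨hx, hx0⟩
            obtain ⟨u, rfl⟩ := Fin.exists_succ_eq.2 hx0
            exact ⟨u, hx, rfl⟩
        have hsplit := Finset.card_filter_add_card_filter_not
          (s := A) (p := fun x => x = (0 : Fin (N+1)))
        have h1 : (A.filter (fun x => x = (0 : Fin (N+1)))).card
            = if (0 : Fin (N+1)) ∈ A then 1 else 0 := by
          rw [Finset.filter_eq']
          split <;> simp
        have h2 : (A.filter (fun x => ¬ x = (0 : Fin (N+1)))).card = (R' b g).card := by
          rw [← himg, Finset.card_map]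
        omega
      -- color condition decomposition
      have colR : ∀ (b : Bool) (g : Fin N → Bool),
          (∀ t ∈ R (Fin.cons b g), (Fin.cons b g : Fin (N+1) → Bool) t = col)
            ↔ (((0 : Fin (N+1)) ∈ R (Fin.cons b g)) → b = col)
              ∧ (∀ u ∈ R' b g, g u = col) := by
        intro b g
        constructor
        · intro H
          constructor
          · intro h0; have := H 0 h0; simpa using this
          · intro u hu
            simp only [hR', Finset.mem_filter, Finset.mem_univ, true_and] at hu
            have := H u.succ hu; simpa using this
        · rintro ⟨H0, Hs⟩ t ht
          obtain rfl | ⟨u, rfl⟩ := Fin.eq_zero_or_eq_succ t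
          · simpa using H0 ht
          · have : u ∈ R' b g := by
              simp only [hR', Finset.mem_filter, Finset.mem_univ, true_and]
              exact ht
            simpa using Hs u this
      -- abbreviation for the shifted summand
      have hGnn : ∀ (k' : ℕ) (b : Bool) (g : Fin N → Bool), (0:ℝ) ≤
          (if k' ≤ (R' b g).card ∧ (∀ u ∈ R' b g, g u = col) then wt p g else 0) := by
        intro k' b g
        split
        · exact Finset.prod_nonneg (fun t _ => by split <;> linarith)
        · exact le_rfl
      have hIH : ∀ (k' : ℕ) (b : Bool),
          (∑ g : Fin N → Bool,
            (if k' ≤ (R' b g).card ∧ (∀ u ∈ R' b g, g u = col) then wt p g else 0)) ≤ pc ^ k' :=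
        fun k' b => ih k' (R' b) (hmeas' b)
      rw [sum_cons_decomp (fun h =>
        if k ≤ (R h).card ∧ (∀ t ∈ R h, h t = col) then wt p h else 0)]
      by_cases h0 : (0 : Fin (N+1)) ∈ R (fun _ => false)
      · have hmem : ∀ (b : Bool) (g : Fin N → Bool), (0 : Fin (N+1)) ∈ R (Fin.cons b g) :=
          fun b g => (mem0 _ _).2 h0
        have hzero : ∀ (b : Bool), b ≠ col → ∀ g : Fin N → Bool,
            (if k ≤ (R (Fin.cons b g)).card ∧
                (∀ t ∈ R (Fin.cons b g), (Fin.cons b g : Fin (N+1) → Bool) t = col)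
              then wt p (Fin.cons b g) else 0) = 0 := by
          intro b hb g
          rw [if_neg]
          rintro ⟨-, H⟩
          exact hb (((colR b g).1 H).1 (hmem b g))
        have hcol : ∀ g : Fin N → Bool,
            (if k ≤ (R (Fin.cons col g)).card ∧
                (∀ t ∈ R (Fin.cons col g), (Fin.cons col g : Fin (N+1) → Bool) t = col)
              then wt p (Fin.cons col g) else 0)
            = pc * (if k - 1 ≤ (R' col g).card ∧ (∀ u ∈ R' col g, g u = col)
                then wt p g else 0) := by
          intro g
          rw [wt_cons]
          have hwb : (if col then p else 1 - p) = pc := rfl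
          rw [hwb]
          by_cases hcond : k - 1 ≤ (R' col g).card ∧ (∀ u ∈ R' col g, g u = col)
          · rw [if_pos hcond, if_pos]
            refine ⟨?_, (colR col g).2 ⟨fun _ => rfl, hcond.2⟩⟩
            rw [cardR, if_pos (hmem col g)]
            omega
          · rw [if_neg hcond, if_neg, mul_zero]
            rintro ⟨hcard, H⟩
            refine hcond ⟨?_, ((colR col g).1 H).2⟩
            rw [cardR, if_pos (hmem col g)] at hcard
            omega
        have hsum : (∑ b : Bool, ∑ g : Fin N → Bool,
            (if k ≤ (R (Fin.cons b g)).card ∧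
                (∀ t ∈ R (Fin.cons b g), (Fin.cons b g : Fin (N+1) → Bool) t = col)
              then wt p (Fin.cons b g) else 0))
            = pc * ∑ g : Fin N → Bool,
                (if k - 1 ≤ (R' col g).card ∧ (∀ u ∈ R' col g, g u = col)
                  then wt p g else 0) := by
          rw [Fintype.sum_bool]
          cases col
          · rw [Finset.sum_eq_zero (fun g _ => hzero true (by simp) g), zero_add,
              Finset.sum_congr rfl (fun g _ => hcol g), ← Finset.mul_sum]
          · rw [Finset.sum_eq_zero (fun g _ => hzero false (by simp) g), add_zero,
              Finset.sum_congr rfl (fun g _ => hcol g), ← Finset.mul_sum]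
        rw [hsum]
        have h1 : pc * ∑ g : Fin N → Bool,
            (if k - 1 ≤ (R' col g).card ∧ (∀ u ∈ R' col g, g u = col) then wt p g else 0)
            ≤ pc * pc ^ (k - 1) :=
          mul_le_mul_of_nonneg_left (hIH (k-1) col) hpc0
        refine h1.trans ?_
        cases k with
        | zero => simpa using hpc1
        | succ j =>
            simp only [Nat.add_sub_cancel]
            rw [pow_succ]
            exact le_of_eq (mul_comm _ _)
      · have hmem : ∀ (b : Bool) (g : Fin N → Bool), (0 : Fin (N+1)) ∉ R (Fin.cons b g) :=
          fun b g h => h0 ((mem0 _ _).1 h)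
        have hFbg : ∀ (b : Bool) (g : Fin N → Bool),
            (if k ≤ (R (Fin.cons b g)).card ∧
                (∀ t ∈ R (Fin.cons b g), (Fin.cons b g : Fin (N+1) → Bool) t = col)
              then wt p (Fin.cons b g) else 0)
            = (if b then p else 1 - p) *
                (if k ≤ (R' b g).card ∧ (∀ u ∈ R' b g, g u = col) then wt p g else 0) := by
          intro b g
          rw [wt_cons]
          by_cases hcond : k ≤ (R' b g).card ∧ (∀ u ∈ R' b g, g u = col)
          · rw [if_pos hcond, if_pos]
            refine ⟨?_, (colR b g).2 ⟨fun h => absurd h (hmem b g), hcond.2⟩⟩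
            rw [cardR, if_neg (hmem b g)]
            omega
          · rw [if_neg hcond, if_neg, mul_zero]
            rintro ⟨hcard, H⟩
            refine hcond ⟨?_, ((colR b g).1 H).2⟩
            rw [cardR, if_neg (hmem b g)] at hcard
            omega
        calc (∑ b : Bool, ∑ g : Fin N → Bool,
            (if k ≤ (R (Fin.cons b g)).card ∧
                (∀ t ∈ R (Fin.cons b g), (Fin.cons b g : Fin (N+1) → Bool) t = col)
              then wt p (Fin.cons b g) else 0))
            = ∑ b : Bool, (if b then p else 1 - p) *
                ∑ g : Fin N → Bool,
                  (if k ≤ (R' b g).card ∧ (∀ u ∈ R' b g, g u = col) then wt p g else 0) := by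
              refine Finset.sum_congr rfl (fun b _ => ?_)
              rw [Finset.mul_sum]
              exact Finset.sum_congr rfl (fun g _ => hFbg b g)
          _ ≤ ∑ b : Bool, (if b then p else 1 - p) * pc ^ k := by
              refine Finset.sum_le_sum (fun b _ => ?_)
              refine mul_le_mul_of_nonneg_left (hIH k b) ?_
              cases b <;> simp [hq0, hp0]
          _ = pc ^ k := by
              rw [Fintype.sum_bool]
              simp only [Bool.false_eq_true, if_false, if_true]
              ring


lemma pair_other {e : Finset ℕ} (he : e.card = 2) {x : ℕ} (hx : x ∈ e) :
    ∃ z, z ≠ x ∧ e = {x, z} := by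
  obtain ⟨u, v, huv, rfl⟩ := Finset.card_eq_two.1 he
  rcases Finset.mem_insert.1 hx with rfl | hv
  · exact ⟨v, fun h => huv h.symm, rfl⟩
  · rcases Finset.mem_singleton.1 hv with rfl
    exact ⟨u, huv, Finset.pair_comm u x⟩

lemma exists_matching : ∀ (c : ℕ) (S : Finset ℕ), 2*c ≤ S.card →
    ∃ M : Finset (Finset ℕ), M ⊆ S.powersetCard 2 ∧ M.card = c ∧
      (∀ f ∈ M, ∀ g ∈ M, f ≠ g → Disjoint f g) := by
  intro c
  induction c with
  | zero => intro S _; exact ⟨∅, by simp, by simp, by simp⟩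
  | succ c ih =>
      intro S hS
      have h2 : 2 ≤ S.card := by omega
      obtain ⟨a, ha⟩ := Finset.card_pos.1 (show 0 < S.card by omega)
      have hea : 1 ≤ (S.erase a).card := by
        rw [Finset.card_erase_of_mem ha]; omega
      obtain ⟨b, hb⟩ := Finset.card_pos.1 (show 0 < (S.erase a).card by omega)
      have hba : b ∈ S.erase a := hb
      have hbS : b ∈ S := Finset.mem_of_mem_erase hb
      have hab : a ≠ b := fun h => (Finset.ne_of_mem_erase hb) h.symm
      set S' := (S.erase a).erase b with hS'
      have hS'card : S'.card = S.card - 2 := by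
        rw [hS', Finset.card_erase_of_mem hba, Finset.card_erase_of_mem ha]
        omega
      obtain ⟨M', hM'sub, hM'card, hM'disj⟩ := ih S' (by omega)
      have hpairmem : ({a, b} : Finset ℕ) ∈ S.powersetCard 2 := by
        rw [Finset.mem_powersetCard]
        refine ⟨?_, Finset.card_pair hab⟩
        intro x hx
        rcases Finset.mem_insert.1 hx with rfl | hx
        · exact ha
        · rw [Finset.mem_singleton.1 hx]; exact hbS
      have hnotin : ∀ f ∈ M', a ∉ f ∧ b ∉ f := by
        intro f hf
        have := (Finset.mem_powersetCard.1 (hM'sub hf)).1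
        constructor
        · intro haf
          have := this haf
          exact (Finset.notMem_erase a _) (Finset.mem_of_mem_erase this)
        · intro hbf
          exact (Finset.notMem_erase b _) (this hbf)
      refine ⟨insert {a,b} M', ?_, ?_, ?_⟩
      · intro f hf
        rcases Finset.mem_insert.1 hf with rfl | hf
        · exact hpairmem
        · have := Finset.mem_powersetCard.1 (hM'sub hf)
          rw [Finset.mem_powersetCard]
          exact ⟨this.1.trans ((Finset.erase_subset _ _).trans (Finset.erase_subset _ _)), this.2⟩
      · rw [Finset.card_insert_of_notMem, hM'card]
        intro hmem
        exact (hnotin _ hmem).1 (Finset.mem_insert_self a _)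
      · have hd : ∀ f ∈ M', Disjoint ({a,b} : Finset ℕ) f := by
          intro f hf
          rw [Finset.disjoint_left]
          intro x hx
          rcases Finset.mem_insert.1 hx with rfl | hx
          · exact (hnotin _ hf).1
          · rw [Finset.mem_singleton.1 hx]; exact (hnotin _ hf).2
        intro f hf g hg hfg
        rcases Finset.mem_insert.1 hf with hf1 | hf1 <;>
          rcases Finset.mem_insert.1 hg with hg1 | hg1
        · exact absurd (hf1.trans hg1.symm) hfg
        · rw [hf1]; exact hd g hg1
        · rw [hg1]; exact (hd f hf1).symm
        · exact hM'disj f hf1 g hg1 hfg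

/-- The key combinatorial lemma: there is a matching of `c` pairs such that at
most `c*(c-1)` other pairs are "excused" (built before the pair-edge of one of
their matched endpoints). -/
lemma matching_lemma (S : Finset ℕ) (c : ℕ) (hc : 2*c ≤ S.card)
    (time : Finset ℕ → ℕ)
    (hinj : ∀ e ∈ S.powersetCard 2, ∀ f ∈ S.powersetCard 2, time e = time f → e = f) :
    ∃ M : Finset (Finset ℕ), M ⊆ S.powersetCard 2 ∧ M.card = c ∧
      (∀ f ∈ M, ∀ g ∈ M, f ≠ g → Disjoint f g) ∧
      (((S.powersetCard 2) \ M).filter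
        (fun e => ∃ f ∈ M, ¬ Disjoint e f ∧ time e < time f)).card ≤ c*(c-1) := by
  classical
  set P2 := S.powersetCard 2 with hP2
  set Good : Finset (Finset (Finset ℕ)) :=
    P2.powerset.filter (fun M => M.card = c ∧ ∀ f ∈ M, ∀ g ∈ M, f ≠ g → Disjoint f g)
    with hGood
  have hGoodmem : ∀ M : Finset (Finset ℕ), M ∈ Good ↔
      (M ⊆ P2 ∧ M.card = c ∧ ∀ f ∈ M, ∀ g ∈ M, f ≠ g → Disjoint f g) := by
    intro M
    simp only [hGood, Finset.mem_filter, Finset.mem_powerset, and_assoc]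
  obtain ⟨M₀, hM₀1, hM₀2, hM₀3⟩ := exists_matching c S hc
  obtain ⟨M, hMGood, hMmin⟩ := Finset.exists_min_image Good (fun M => ∑ f ∈ M, 4^(time f))
    ⟨M₀, (hGoodmem M₀).2 ⟨hM₀1, hM₀2, hM₀3⟩⟩
  obtain ⟨hMP2, hMcard, hMdisj⟩ := (hGoodmem M).1 hMGood
  refine ⟨M, hMP2, hMcard, hMdisj, ?_⟩
  have hM2card : ∀ f ∈ M, f.card = 2 := fun f hf => (Finset.mem_powersetCard.1 (hMP2 hf)).2
  have hP2card : ∀ e ∈ P2, e.card = 2 := fun e he => (Finset.mem_powersetCard.1 he).2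
  set Mex := (P2 \ M).filter (fun e => ∃ f ∈ M, ¬ Disjoint e f ∧ time e < time f) with hMex
  set exc : Finset ℕ → Finset (Finset ℕ) := fun f =>
    Mex.filter (fun e => ¬ Disjoint e f ∧ time e < time f ∧
      ∀ g ∈ M, ¬ Disjoint e g → time g ≤ time f) with hexc
  -- Step A : for e ∈ exc f, the endpoint of e outside f lies in an earlier pair of M
  have stepA : ∀ f ∈ M, ∀ e ∈ exc f, ∃ g ∈ M, g ≠ f ∧ ¬ Disjoint e g ∧ time g < time f := by
    intro f hf e he
    simp only [hexc, Finset.mem_filter] at he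
    obtain ⟨heMex, hconf, hlt, hmax⟩ := he
    simp only [hMex, Finset.mem_filter, Finset.mem_sdiff] at heMex
    obtain ⟨⟨heP2, heM⟩, -⟩ := heMex
    have he2 : e.card = 2 := hP2card e heP2
    have hf2 : f.card = 2 := hM2card f hf
    obtain ⟨x, hxe, hxf⟩ := Finset.not_disjoint_iff.1 hconf
    obtain ⟨z, hzx, hez⟩ := pair_other he2 hxe
    have hzf : z ∉ f := by
      intro hzf
      have hsub : e ⊆ f := by
        rw [hez]
        intro w hw
        rcases Finset.mem_insert.1 hw with rfl | hw
        · exact hxf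
        · rw [Finset.mem_singleton.1 hw]; exact hzf
      have : e = f := Finset.eq_of_subset_of_card_le hsub (by omega)
      exact heM (this ▸ hf)
    have hze : z ∈ e := by rw [hez]; exact Finset.mem_insert_of_mem (Finset.mem_singleton_self z)
    -- the outside endpoint z must be matched, else we could swap e for f
    have hzg : ∃ g ∈ M, z ∈ g := by
      by_contra hcon
      push_neg at hcon
      set M1 := insert e (M.erase f) with hM1
      have heMe : e ∉ M.erase f := fun h => heM (Finset.mem_of_mem_erase h)
      have hM1Good : M1 ∈ Good := by
        rw [hGoodmem]
        refine ⟨?_, ?_, ?_⟩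
        · rw [hM1, Finset.insert_subset_iff]
          exact ⟨heP2, (Finset.erase_subset _ _).trans hMP2⟩
        · rw [hM1, Finset.card_insert_of_notMem heMe, Finset.card_erase_of_mem hf]
          have : 1 ≤ M.card := Finset.card_pos.2 ⟨f, hf⟩
          omega
        · have hd : ∀ g ∈ M.erase f, Disjoint e g := by
            intro g hg
            rw [Finset.disjoint_left]
            intro w hw
            rw [hez] at hw
            rcases Finset.mem_insert.1 hw with rfl | hw
            · intro hwg
              exact Finset.disjoint_left.1
                (hMdisj f hf g (Finset.mem_of_mem_erase hg) (Finset.ne_of_mem_erase hg).symm)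
                hxf hwg
            · rw [Finset.mem_singleton.1 hw]
              intro hwg
              exact hcon g (Finset.mem_of_mem_erase hg) hwg
          intro f1 hf1 f2 hf2 hne
          rw [hM1] at hf1 hf2
          rcases Finset.mem_insert.1 hf1 with rfl | hf1 <;>
            rcases Finset.mem_insert.1 hf2 with h2 | h2
          · exact absurd h2.symm hne
          · exact hd f2 h2
          · rw [h2]; exact (hd f1 hf1).symm
          · exact hMdisj f1 (Finset.mem_of_mem_erase hf1) f2 (Finset.mem_of_mem_erase h2) hne
      have hw1 : ∑ g ∈ M1, 4^(time g) = 4^(time e) + ∑ g ∈ M.erase f, 4^(time g) := by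
        rw [hM1, Finset.sum_insert heMe]
      have hw2 : 4^(time f) + ∑ g ∈ M.erase f, 4^(time g) = ∑ g ∈ M, 4^(time g) :=
        Finset.add_sum_erase M (fun g => 4^(time g)) hf
      have hpow : (4:ℕ)^(time e) < 4^(time f) := Nat.pow_lt_pow_right (by norm_num) hlt
      have := hMmin M1 hM1Good
      omega
    obtain ⟨g, hgM, hzgmem⟩ := hzg
    have hgf : g ≠ f := fun h => hzf (h ▸ hzgmem)
    have hconf' : ¬ Disjoint e g := fun h => Finset.disjoint_left.1 h hze hzgmem
    have hle : time g ≤ time f := hmax g hgM hconf'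
    have hne : time g ≠ time f := fun h => hgf (hinj g (hMP2 hgM) f (hMP2 hf) h)
    exact ⟨g, hgM, hgf, hconf', lt_of_le_of_ne hle hne⟩
  -- Step C : at most two cross edges between two pairs of M are excused
  have stepC : ∀ f ∈ M, ∀ g ∈ M, g ≠ f →
      ((exc f).filter (fun e => ¬ Disjoint e g)).card ≤ 2 := by
    intro f hf g hg hgf
    by_contra hcard
    push_neg at hcard
    have hfg : Disjoint f g := hMdisj f hf g hg (fun h => hgf h.symm)
    obtain ⟨x, y, hxy, hfxy⟩ := Finset.card_eq_two.1 (hM2card f hf)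
    obtain ⟨z, w, hzw, hgzw⟩ := Finset.card_eq_two.1 (hM2card g hg)
    have hxg : x ∉ g := Finset.disjoint_left.1 hfg (hfxy ▸ Finset.mem_insert_self x _)
    have hyg : y ∉ g := Finset.disjoint_left.1 hfg
      (hfxy ▸ Finset.mem_insert_of_mem (Finset.mem_singleton_self y))
    have hzf : z ∉ f := Finset.disjoint_right.1 hfg (hgzw ▸ Finset.mem_insert_self z _)
    have hwf : w ∉ f := Finset.disjoint_right.1 hfg
      (hgzw ▸ Finset.mem_insert_of_mem (Finset.mem_singleton_self w))
    set T := (exc f).filter (fun e => ¬ Disjoint e g) with hT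
    set Q : Finset (Finset ℕ) := {{x,z},{x,w},{y,z},{y,w}} with hQ
    -- facts about elements of T
    have hTfact : ∀ e ∈ T, e ∈ P2 ∧ e ∉ M ∧ time e < time f ∧ e ∈ Q := by
      intro e he
      simp only [hT, Finset.mem_filter] at he
      obtain ⟨hef, heg⟩ := he
      simp only [hexc, Finset.mem_filter] at hef
      obtain ⟨heMex, hconf, hlt, -⟩ := hef
      simp only [hMex, Finset.mem_filter, Finset.mem_sdiff] at heMex
      obtain ⟨⟨heP2, heM⟩, -⟩ := heMex
      have he2 : e.card = 2 := hP2card e heP2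
      obtain ⟨a, hae, haf⟩ := Finset.not_disjoint_iff.1 hconf
      obtain ⟨b, hba, heab⟩ := pair_other he2 hae
      have hag : a ∉ g := Finset.disjoint_left.1 hfg haf
      have hbg : b ∈ g := by
        obtain ⟨a', ha'e, ha'g⟩ := Finset.not_disjoint_iff.1 heg
        rw [heab] at ha'e
        rcases Finset.mem_insert.1 ha'e with rfl | h
        · exact absurd ha'g hag
        · rw [Finset.mem_singleton.1 h] at ha'g; exact ha'g
      refine ⟨heP2, heM, hlt, ?_⟩
      rw [hfxy] at haf
      rw [hgzw] at hbg
      simp only [hQ, Finset.mem_insert, Finset.mem_singleton]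
      rcases Finset.mem_insert.1 haf with rfl | haf <;>
        rcases Finset.mem_insert.1 hbg with rfl | hbg
      · left; exact heab
      · right; left; rw [Finset.mem_singleton.1 hbg] at heab; exact heab
      · rw [Finset.mem_singleton.1 haf] at heab
        right; right; left; exact heab
      · rw [Finset.mem_singleton.1 haf] at heab
        rw [Finset.mem_singleton.1 hbg] at heab
        right; right; right; exact heab
    -- the four candidate cross edges are pairwise distinct
    have hd1 : ({x,z} : Finset ℕ) ≠ {x,w} := by
      intro h
      have : w ∈ ({x,z} : Finset ℕ) := h ▸ Finset.mem_insert_of_mem (Finset.mem_singleton_self w)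
      rcases Finset.mem_insert.1 this with rfl | hmem
      · exact hwf (hfxy ▸ Finset.mem_insert_self _ _)
      · exact hzw (Finset.mem_singleton.1 hmem).symm
    have hd2 : ({x,z} : Finset ℕ) ≠ {y,z} := by
      intro h
      have : y ∈ ({x,z} : Finset ℕ) := h ▸ Finset.mem_insert_self y _
      rcases Finset.mem_insert.1 this with h' | hmem
      · exact hxy h'.symm
      · exact hyg (hgzw ▸ (Finset.mem_singleton.1 hmem ▸ Finset.mem_insert_self _ _))
    have hd3 : ({x,z} : Finset ℕ) ≠ {y,w} := by
      intro h
      have : y ∈ ({x,z} : Finset ℕ) := h ▸ Finset.mem_insert_self y _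
      rcases Finset.mem_insert.1 this with h' | hmem
      · exact hxy h'.symm
      · refine hyg ?_
        rw [Finset.mem_singleton.1 hmem, hgzw]
        exact Finset.mem_insert_self _ _
    have hd4 : ({x,w} : Finset ℕ) ≠ {y,z} := by
      intro h
      have : y ∈ ({x,w} : Finset ℕ) := h ▸ Finset.mem_insert_self y _
      rcases Finset.mem_insert.1 this with h' | hmem
      · exact hxy h'.symm
      · refine hyg ?_
        rw [Finset.mem_singleton.1 hmem, hgzw]
        exact Finset.mem_insert_of_mem (Finset.mem_singleton_self _)
    have hd5 : ({x,w} : Finset ℕ) ≠ {y,w} := by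
      intro h
      have : y ∈ ({x,w} : Finset ℕ) := h ▸ Finset.mem_insert_self y _
      rcases Finset.mem_insert.1 this with h' | hmem
      · exact hxy h'.symm
      · refine hyg ?_
        rw [Finset.mem_singleton.1 hmem, hgzw]
        exact Finset.mem_insert_of_mem (Finset.mem_singleton_self _)
    have hd6 : ({y,z} : Finset ℕ) ≠ {y,w} := by
      intro h
      have : w ∈ ({y,z} : Finset ℕ) := h ▸ Finset.mem_insert_of_mem (Finset.mem_singleton_self w)
      rcases Finset.mem_insert.1 this with rfl | hmem
      · exact hwf (hfxy ▸ Finset.mem_insert_of_mem (Finset.mem_singleton_self _))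
      · exact hzw (Finset.mem_singleton.1 hmem).symm
    -- find two disjoint excused cross edges
    have hdisjA : Disjoint ({x,z} : Finset ℕ) ({y,w} : Finset ℕ) := by
      rw [Finset.disjoint_left]
      intro u hu hv
      rcases Finset.mem_insert.1 hu with rfl | hu
      · rcases Finset.mem_insert.1 hv with h' | h'
        · exact hxy h'
        · exact hxg (hgzw ▸ (Finset.mem_singleton.1 h' ▸
            Finset.mem_insert_of_mem (Finset.mem_singleton_self _)))
      · obtain rfl := Finset.mem_singleton.1 hu
        rcases Finset.mem_insert.1 hv with h' | h'
        · exact hzf (h' ▸ hfxy ▸ Finset.mem_insert_of_mem (Finset.mem_singleton_self _))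
        · exact hzw (Finset.mem_singleton.1 h')
    have hdisjB : Disjoint ({x,w} : Finset ℕ) ({y,z} : Finset ℕ) := by
      rw [Finset.disjoint_left]
      intro u hu hv
      rcases Finset.mem_insert.1 hu with rfl | hu
      · rcases Finset.mem_insert.1 hv with h' | h'
        · exact hxy h'
        · exact hxg (hgzw ▸ (Finset.mem_singleton.1 h' ▸ Finset.mem_insert_self _ _))
      · obtain rfl := Finset.mem_singleton.1 hu
        rcases Finset.mem_insert.1 hv with h' | h'
        · exact hwf (h' ▸ hfxy ▸ Finset.mem_insert_of_mem (Finset.mem_singleton_self _))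
        · exact hzw (Finset.mem_singleton.1 h').symm
    have hpigeon : ∃ e1 e2, e1 ∈ T ∧ e2 ∈ T ∧ e1 ≠ e2 ∧ Disjoint e1 e2 := by
      by_cases h1 : ({x,z} : Finset ℕ) ∈ T ∧ ({y,w} : Finset ℕ) ∈ T
      · exact ⟨_, _, h1.1, h1.2, hd3, hdisjA⟩
      by_cases h2 : ({x,w} : Finset ℕ) ∈ T ∧ ({y,z} : Finset ℕ) ∈ T
      · exact ⟨_, _, h2.1, h2.2, hd4, hdisjB⟩
      exfalso
      rw [not_and_or] at h1 h2
      obtain ⟨m1, hm1Q, hm1T, m2, hm2Q, hm2T, hm12⟩ :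
          ∃ m1, m1 ∈ Q ∧ m1 ∉ T ∧ ∃ m2, m2 ∈ Q ∧ m2 ∉ T ∧ m1 ≠ m2 := by
        have q1 : ({x,z} : Finset ℕ) ∈ Q := by rw [hQ]; exact Finset.mem_insert_self _ _
        have q2 : ({x,w} : Finset ℕ) ∈ Q := by
          rw [hQ]; exact Finset.mem_insert_of_mem (Finset.mem_insert_self _ _)
        have q3 : ({y,z} : Finset ℕ) ∈ Q := by
          rw [hQ]
          exact Finset.mem_insert_of_mem (Finset.mem_insert_of_mem (Finset.mem_insert_self _ _))
        have q4 : ({y,w} : Finset ℕ) ∈ Q := by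
          rw [hQ]
          exact Finset.mem_insert_of_mem (Finset.mem_insert_of_mem
            (Finset.mem_insert_of_mem (Finset.mem_singleton_self _)))
        rcases h1 with h1 | h1 <;> rcases h2 with h2 | h2
        · exact ⟨_, q1, h1, _, q2, h2, hd1⟩
        · exact ⟨_, q1, h1, _, q3, h2, hd2⟩
        · exact ⟨_, q4, h1, _, q2, h2, fun h => hd5 h.symm⟩
        · exact ⟨_, q4, h1, _, q3, h2, fun h => hd6 h.symm⟩
      have hTsub : T ⊆ (Q.erase m1).erase m2 := by
        intro e he
        refine Finset.mem_erase.2 ⟨fun h => hm2T (h ▸ he), Finset.mem_erase.2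
          ⟨fun h => hm1T (h ▸ he), (hTfact e he).2.2.2⟩⟩
      have hQcard : Q.card ≤ 4 := by
        rw [hQ]
        have c1 := Finset.card_insert_le ({x,z} : Finset ℕ)
          ({{x,w},{y,z},{y,w}} : Finset (Finset ℕ))
        have c2 := Finset.card_insert_le ({x,w} : Finset ℕ)
          ({{y,z},{y,w}} : Finset (Finset ℕ))
        have c3 := Finset.card_insert_le ({y,z} : Finset ℕ)
          ({({y,w} : Finset ℕ)} : Finset (Finset ℕ))
        have c4 : ({({y,w} : Finset ℕ)} : Finset (Finset ℕ)).card = 1 := Finset.card_singleton _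
        omega
      have h1' : ((Q.erase m1).erase m2).card ≤ 2 := by
        rw [Finset.card_erase_of_mem (Finset.mem_erase.2 ⟨fun h => hm12 h.symm, hm2Q⟩),
          Finset.card_erase_of_mem hm1Q]
        omega
      have := (Finset.card_le_card hTsub).trans h1'
      omega
    obtain ⟨e1, e2, he1T, he2T, hne12, hdisj12⟩ := hpigeon
    obtain ⟨he1P2, he1M, he1lt, he1Q⟩ := hTfact e1 he1T
    obtain ⟨he2P2, he2M, he2lt, he2Q⟩ := hTfact e2 he2T
    -- elements of Q are inside f ∪ g
    have hQsub : ∀ q ∈ Q, q ⊆ f ∪ g := by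
      intro q hq
      simp only [hQ, Finset.mem_insert, Finset.mem_singleton] at hq
      have hxm : x ∈ f ∪ g := Finset.mem_union_left _ (hfxy ▸ Finset.mem_insert_self _ _)
      have hym : y ∈ f ∪ g := Finset.mem_union_left _
        (hfxy ▸ Finset.mem_insert_of_mem (Finset.mem_singleton_self _))
      have hzm : z ∈ f ∪ g := Finset.mem_union_right _ (hgzw ▸ Finset.mem_insert_self _ _)
      have hwm : w ∈ f ∪ g := Finset.mem_union_right _
        (hgzw ▸ Finset.mem_insert_of_mem (Finset.mem_singleton_self _))
      rcases hq with rfl | rfl | rfl | rfl <;>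
        · intro u hu
          rcases Finset.mem_insert.1 hu with rfl | hu
          · assumption
          · rw [Finset.mem_singleton.1 hu]; assumption
    -- the swap
    set EE := (M.erase f).erase g with hEE
    have hgMf : g ∈ M.erase f := Finset.mem_erase.2 ⟨hgf, hg⟩
    have he2EE : e2 ∉ EE := fun h => he2M (Finset.mem_of_mem_erase (Finset.mem_of_mem_erase h))
    have he1i : e1 ∉ insert e2 EE := by
      intro h
      rcases Finset.mem_insert.1 h with h | h
      · exact hne12 h
      · exact he1M (Finset.mem_of_mem_erase (Finset.mem_of_mem_erase h))
    have hEEfact : ∀ hh ∈ EE, hh ∈ M ∧ hh ≠ f ∧ hh ≠ g := by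
      intro hh h
      exact ⟨Finset.mem_of_mem_erase (Finset.mem_of_mem_erase h),
        Finset.ne_of_mem_erase (Finset.mem_of_mem_erase h), Finset.ne_of_mem_erase h⟩
    have hcross : ∀ e' ∈ Q, ∀ hh ∈ EE, Disjoint e' hh := by
      intro e' he' hh h
      obtain ⟨hhM, hhf, hhg⟩ := hEEfact hh h
      rw [Finset.disjoint_left]
      intro u hu
      rcases Finset.mem_union.1 (hQsub e' he' hu) with h' | h'
      · exact Finset.disjoint_left.1 (hMdisj f hf hh hhM (fun e => hhf e.symm)) h'
      · exact Finset.disjoint_left.1 (hMdisj g hg hh hhM (fun e => hhg e.symm)) h'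
    set M2 := insert e1 (insert e2 EE) with hM2
    have hM2Good : M2 ∈ Good := by
      rw [hGoodmem]
      refine ⟨?_, ?_, ?_⟩
      · rw [hM2, Finset.insert_subset_iff, Finset.insert_subset_iff]
        exact ⟨he1P2, he2P2,
          ((Finset.erase_subset _ _).trans (Finset.erase_subset _ _)).trans hMP2⟩
      · rw [hM2, Finset.card_insert_of_notMem he1i, Finset.card_insert_of_notMem he2EE,
          hEE, Finset.card_erase_of_mem hgMf, Finset.card_erase_of_mem hf]
        have : 1 ≤ (M.erase f).card := Finset.card_pos.2 ⟨g, hgMf⟩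
        rw [Finset.card_erase_of_mem hf] at this
        omega
      · intro f1 hf1 f2 hf2 hne
        rw [hM2] at hf1 hf2
        have mem3 : ∀ a : Finset ℕ, a ∈ insert e1 (insert e2 EE) →
            a = e1 ∨ a = e2 ∨ a ∈ EE := by
          intro a ha
          rcases Finset.mem_insert.1 ha with h | h
          · exact Or.inl h
          rcases Finset.mem_insert.1 h with h | h
          · exact Or.inr (Or.inl h)
          · exact Or.inr (Or.inr h)
        have hQd : ∀ a : Finset ℕ, (a = e1 ∨ a = e2 ∨ a ∈ EE) →
            ∀ b : Finset ℕ, (b = e1 ∨ b = e2 ∨ b ∈ EE) → a ≠ b → Disjoint a b := by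
          rintro a (ha | ha | ha) b (hb | hb | hb) hab
          · exact absurd (ha.trans hb.symm) hab
          · rw [ha, hb]; exact hdisj12
          · rw [ha]; exact hcross e1 he1Q b hb
          · rw [ha, hb]; exact hdisj12.symm
          · exact absurd (ha.trans hb.symm) hab
          · rw [ha]; exact hcross e2 he2Q b hb
          · rw [hb]; exact (hcross e1 he1Q a ha).symm
          · rw [hb]; exact (hcross e2 he2Q a ha).symm
          · exact hMdisj a (hEEfact a ha).1 b (hEEfact b hb).1 hab
        exact hQd f1 (mem3 f1 hf1) f2 (mem3 f2 hf2) hne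
    -- weight comparison
    have hw1 : ∑ g' ∈ M2, 4^(time g') = 4^(time e1) + (4^(time e2) + ∑ g' ∈ EE, 4^(time g')) := by
      rw [hM2, Finset.sum_insert he1i, Finset.sum_insert he2EE]
    have hw2 : 4^(time g) + ∑ g' ∈ EE, 4^(time g') = ∑ g' ∈ M.erase f, 4^(time g') :=
      Finset.add_sum_erase _ (fun g' => 4^(time g')) hgMf
    have hw3 : 4^(time f) + ∑ g' ∈ M.erase f, 4^(time g') = ∑ g' ∈ M, 4^(time g') :=
      Finset.add_sum_erase _ (fun g' => 4^(time g')) hf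
    have hp1 : (4:ℕ)^(time e1) ≤ 4^(time f - 1) :=
      Nat.pow_le_pow_right (by norm_num) (by omega)
    have hp2 : (4:ℕ)^(time e2) ≤ 4^(time f - 1) :=
      Nat.pow_le_pow_right (by norm_num) (by omega)
    have hp3 : (4:ℕ)^(time f) = 4 * 4^(time f - 1) := by
      have h' : time f = (time f - 1) + 1 := by omega
      rw [h', pow_succ, Nat.add_sub_cancel]
      ring
    have hp4 : 1 ≤ (4:ℕ)^(time f - 1) := Nat.one_le_pow _ _ (by norm_num)
    have hmin2 := hMmin M2 hM2Good
    rw [hw1, ← hw3, ← hw2, ← add_assoc, ← add_assoc] at hmin2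
    have h5 : 4 ^ time f + 4 ^ time g ≤ 4 ^ time e1 + 4 ^ time e2 :=
      Nat.le_of_add_le_add_right hmin2
    rw [hp3] at h5
    have h7 : 4 * 4^(time f - 1) ≤ 2 * 4^(time f - 1) := by
      calc 4 * 4^(time f - 1) ≤ 4 * 4^(time f - 1) + 4 ^ time g := Nat.le_add_right _ _
        _ ≤ 4 ^ time e1 + 4 ^ time e2 := h5
        _ ≤ 4^(time f - 1) + 4^(time f - 1) := Nat.add_le_add hp1 hp2
        _ = 2 * 4^(time f - 1) := (two_mul _).symm
    rw [mul_comm 4 _, mul_comm 2 _] at h7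
    have h8 := Nat.le_of_mul_le_mul_left h7 (by omega : 0 < 4^(time f - 1))
    norm_num at h8
  -- Step 0 : every excused edge is excused by some pair, chosen with maximal time
  have step0 : Mex ⊆ M.biUnion exc := by
    intro e he
    have he' := he
    simp only [hMex, Finset.mem_filter, Finset.mem_sdiff] at he'
    obtain ⟨⟨heP2, heM⟩, f0, hf0M, hf0c, hf0t⟩ := he'
    set C := M.filter (fun g => ¬ Disjoint e g) with hC
    have hf0C : f0 ∈ C := Finset.mem_filter.2 ⟨hf0M, hf0c⟩
    obtain ⟨fs, hfsC, hfsmax⟩ := Finset.exists_max_image C time ⟨f0, hf0C⟩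
    have hfsC' := Finset.mem_filter.1 hfsC
    refine Finset.mem_biUnion.2 ⟨fs, hfsC'.1, ?_⟩
    simp only [hexc, Finset.mem_filter]
    refine ⟨he, hfsC'.2, ?_, ?_⟩
    · exact lt_of_lt_of_le hf0t (hfsmax f0 hf0C)
    · intro g hgM hgc
      exact hfsmax g (Finset.mem_filter.2 ⟨hgM, hgc⟩)
  -- ranks
  set rank : Finset ℕ → ℕ := fun f => (M.filter (fun g => time g < time f)).card with hrank
  have hrankmono : ∀ f1 ∈ M, ∀ f2 ∈ M, time f1 < time f2 → rank f1 < rank f2 := by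
    intro f1 h1 f2 h2 hlt
    apply Finset.card_lt_card
    rw [Finset.ssubset_iff_of_subset]
    · exact ⟨f1, Finset.mem_filter.2 ⟨h1, hlt⟩,
        fun hmem => lt_irrefl _ (Finset.mem_filter.1 hmem).2⟩
    · intro g hg
      have := Finset.mem_filter.1 hg
      exact Finset.mem_filter.2 ⟨this.1, this.2.trans hlt⟩
  have hexccard : ∀ f ∈ M, (exc f).card ≤ 2 * rank f := by
    intro f hf
    have hsub : exc f ⊆ (M.filter (fun g => time g < time f)).biUnion
        (fun g => (exc f).filter (fun e => ¬ Disjoint e g)) := by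
      intro e he
      obtain ⟨g, hgM, hgf, hconf, hglt⟩ := stepA f hf e he
      exact Finset.mem_biUnion.2 ⟨g, Finset.mem_filter.2 ⟨hgM, hglt⟩,
        Finset.mem_filter.2 ⟨he, hconf⟩⟩
    calc (exc f).card ≤ _ := Finset.card_le_card hsub
      _ ≤ ∑ g ∈ M.filter (fun g => time g < time f),
            ((exc f).filter (fun e => ¬ Disjoint e g)).card := Finset.card_biUnion_le
      _ ≤ ∑ _g ∈ M.filter (fun g => time g < time f), 2 := by
          refine Finset.sum_le_sum ?_
          intro g hg
          have hgm := Finset.mem_filter.1 hg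
          exact stepC f hf g hgm.1 (fun h => lt_irrefl _ (h ▸ hgm.2))
      _ = 2 * rank f := by rw [Finset.sum_const, smul_eq_mul, mul_comm]
  have hranksum : ∑ f ∈ M, rank f ≤ ∑ i ∈ Finset.range c, i := by
    have hinjr : ∀ x ∈ M, ∀ y ∈ M, rank x = rank y → x = y := by
      intro x hx y hy hr
      by_contra hne
      have htne : time x ≠ time y := fun h => hne (hinj x (hMP2 hx) y (hMP2 hy) h)
      rcases lt_or_gt_of_ne htne with h | h
      · exact absurd hr (Nat.ne_of_lt (hrankmono x hx y hy h))
      · exact absurd hr.symm (Nat.ne_of_lt (hrankmono y hy x hx h))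
    have himgsub : M.image rank ⊆ Finset.range c := by
      intro r hr
      obtain ⟨f, hfM, rfl⟩ := Finset.mem_image.1 hr
      rw [Finset.mem_range]
      have hsub2 : M.filter (fun g => time g < time f) ⊆ M.erase f := by
        intro g hg
        have := Finset.mem_filter.1 hg
        exact Finset.mem_erase.2 ⟨fun h => lt_irrefl _ (h ▸ this.2), this.1⟩
      have h1 := Finset.card_le_card hsub2
      rw [Finset.card_erase_of_mem hfM] at h1
      have h2 : 1 ≤ M.card := Finset.card_pos.2 ⟨f, hfM⟩
      rw [hrank]
      simp only
      omega
    calc ∑ f ∈ M, rank f = ∑ r ∈ M.image rank, r :=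
        (Finset.sum_image (f := fun r => r) hinjr).symm
      _ ≤ ∑ i ∈ Finset.range c, i := Finset.sum_le_sum_of_subset himgsub
  have hgauss : (∑ i ∈ Finset.range c, i) * 2 = c * (c - 1) := Finset.sum_range_id_mul_two c
  calc Mex.card ≤ (M.biUnion exc).card := Finset.card_le_card step0
    _ ≤ ∑ f ∈ M, (exc f).card := Finset.card_biUnion_le
    _ ≤ ∑ f ∈ M, 2 * rank f := Finset.sum_le_sum hexccard
    _ = 2 * ∑ f ∈ M, rank f := by rw [Finset.mul_sum]
    _ ≤ c * (c-1) := by omega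


/-- Finite Ramsey theorem, in a convenient form. -/
lemma ramsey_exists : ∀ (m n : ℕ), ∃ R : ℕ, ∀ (V : Finset ℕ) (χ : Sym2 ℕ → Bool),
    R ≤ V.card → ∃ S : Finset ℕ, S ⊆ V ∧
      ((S.card = m ∧ ∀ u ∈ S, ∀ v ∈ S, u ≠ v → χ s(u,v) = true) ∨
       (S.card = n ∧ ∀ u ∈ S, ∀ v ∈ S, u ≠ v → χ s(u,v) = false)) := by
  intro m
  induction m with
  | zero =>
      intro n
      exact ⟨0, fun V χ _ => ⟨∅, Finset.empty_subset _,
        Or.inl ⟨Finset.card_empty, by intro u hu; exact absurd hu (Finset.notMem_empty u)⟩⟩⟩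
  | succ m ihm =>
      intro n
      induction n with
      | zero =>
          exact ⟨0, fun V χ _ => ⟨∅, Finset.empty_subset _,
            Or.inr ⟨Finset.card_empty, by intro u hu; exact absurd hu (Finset.notMem_empty u)⟩⟩⟩
      | succ n ihn =>
          obtain ⟨R1, hR1⟩ := ihm (n+1)
          obtain ⟨R2, hR2⟩ := ihn
          refine ⟨R1 + R2 + 1, ?_⟩
          intro V χ hV
          obtain ⟨v, hv⟩ := Finset.card_pos.1 (show 0 < V.card by omega)
          set A := (V.erase v).filter (fun u => χ s(v,u) = true) with hA
          set B := (V.erase v).filter (fun u => ¬ (χ s(v,u) = true)) with hB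
          have hcards : A.card + B.card = (V.erase v).card :=
            Finset.card_filter_add_card_filter_not _
          have hVe : (V.erase v).card = V.card - 1 := Finset.card_erase_of_mem hv
          have hAV : A ⊆ V := (Finset.filter_subset _ _).trans (Finset.erase_subset _ _)
          have hBV : B ⊆ V := (Finset.filter_subset _ _).trans (Finset.erase_subset _ _)
          by_cases hAcard : R1 ≤ A.card
          · obtain ⟨S, hSA, hS⟩ := hR1 A χ hAcard
            rcases hS with ⟨hScard, hSmono⟩ | ⟨hScard, hSmono⟩
            · -- extend the red clique by v
              have hvS : v ∉ S := by
                intro hvS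
                have := Finset.mem_filter.1 (hSA hvS)
                exact Finset.notMem_erase v V this.1
              refine ⟨insert v S, ?_, Or.inl ⟨?_, ?_⟩⟩
              · rw [Finset.insert_subset_iff]
                exact ⟨hv, hSA.trans hAV⟩
              · rw [Finset.card_insert_of_notMem hvS, hScard]
              · intro u hu w hw huw
                have hred : ∀ x ∈ S, χ s(v, x) = true := by
                  intro x hx
                  exact (Finset.mem_filter.1 (hSA hx)).2
                rcases Finset.mem_insert.1 hu with rfl | hu <;>
                  rcases Finset.mem_insert.1 hw with h2 | h2
                · exact absurd h2.symm huw
                · exact hred w h2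
                · rw [h2, Sym2.eq_swap]
                  exact hred u hu
                · exact hSmono u hu w h2 huw
            · exact ⟨S, hSA.trans hAV, Or.inr ⟨hScard, hSmono⟩⟩
          · have hBcard : R2 ≤ B.card := by omega
            obtain ⟨S, hSB, hS⟩ := hR2 B χ hBcard
            rcases hS with ⟨hScard, hSmono⟩ | ⟨hScard, hSmono⟩
            · exact ⟨S, hSB.trans hBV, Or.inl ⟨hScard, hSmono⟩⟩
            · -- extend the blue clique by v
              have hvS : v ∉ S := by
                intro hvS
                have := Finset.mem_filter.1 (hSB hvS)
                exact Finset.notMem_erase v V this.1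
              refine ⟨insert v S, ?_, Or.inr ⟨?_, ?_⟩⟩
              · rw [Finset.insert_subset_iff]
                exact ⟨hv, hSB.trans hBV⟩
              · rw [Finset.card_insert_of_notMem hvS, hScard]
              · intro u hu w hw huw
                have hblue : ∀ x ∈ S, χ s(v, x) = false := by
                  intro x hx
                  have := (Finset.mem_filter.1 (hSB hx)).2
                  simpa using this
                rcases Finset.mem_insert.1 hu with rfl | hu <;>
                  rcases Finset.mem_insert.1 hw with h2 | h2
                · exact absurd h2.symm huw
                · exact hblue w h2
                · rw [h2, Sym2.eq_swap]
                  exact hblue u hu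
                · exact hSmono u hu w h2 huw

/-- Builder's fixed enumeration of all pairs. -/
def enumEdge (t : ℕ) : Sym2 ℕ :=
  s((Nat.unpair t).1, (Nat.unpair t).1 + (Nat.unpair t).2 + 1)

lemma enumEdge_not_isDiag (t : ℕ) : ¬ (enumEdge t).IsDiag := by
  rw [enumEdge, Sym2.isDiag_iff_proj_eq]
  omega

lemma enumEdge_inj : Function.Injective enumEdge := by
  intro t1 t2 h
  rw [enumEdge, enumEdge, Sym2.eq_iff] at h
  have : (Nat.unpair t1).1 = (Nat.unpair t2).1 ∧ (Nat.unpair t1).2 = (Nat.unpair t2).2 := by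
    rcases h with ⟨h1, h2⟩ | ⟨h1, h2⟩ <;> omega
  have h12 : Nat.unpair t1 = Nat.unpair t2 := Prod.ext this.1 this.2
  rw [← Nat.pair_unpair t1, ← Nat.pair_unpair t2, h12]

lemma enumEdge_pair (u v : ℕ) (huv : u < v) : enumEdge (Nat.pair u (v - u - 1)) = s(u, v) := by
  rw [enumEdge, Nat.unpair_pair]
  have h1 : u + (v - u - 1) + 1 = v := by omega
  show s(u, u + (v - u - 1) + 1) = s(u, v)
  rw [h1]

lemma histOf_length (P : List Bool → Bool) (t : ℕ) : (histOf P t).length = t := by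
  induction t with
  | zero => rfl
  | succ t ih => rw [histOf, List.length_append, ih]; rfl

lemma builder_wins_eventually (m n : ℕ) : ∃ N₀, BuilderWins m n N₀ := by
  obtain ⟨R, hR⟩ := ramsey_exists m n
  set N₀ := ((Finset.range R) ×ˢ (Finset.range R)).sup (fun ab => Nat.pair ab.1 ab.2) + 1 with hN₀
  refine ⟨N₀, fun h => enumEdge h.length, ⟨fun h => enumEdge_not_isDiag _, ?_⟩, ?_⟩
  · intro h i hi
    intro hEq
    have hEq' : enumEdge (h.take i).length = enumEdge h.length := hEq
    have hlen : (h.take i).length = i := by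
      rw [List.length_take]; omega
    rw [hlen] at hEq'
    exact absurd (enumEdge_inj hEq') (by omega)
  · intro P
    set χ : Sym2 ℕ → Bool := fun z =>
      P (histOf P (Nat.pair (Sym2.lift ⟨fun a b => min a b, fun a b => min_comm a b⟩ z)
        ((Sym2.lift ⟨fun a b => max a b, fun a b => max_comm a b⟩ z) -
         (Sym2.lift ⟨fun a b => min a b, fun a b => min_comm a b⟩ z) - 1))) with hχ
    obtain ⟨S, hSV, hS⟩ := hR (Finset.range R) χ (le_of_eq (Finset.card_range R).symm)
    have main : ∀ a b, a ∈ S → b ∈ S → a < b →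
        ∃ t, t < N₀ ∧ enumEdge (histOf P t).length = s(a,b) ∧ P (histOf P t) = χ s(a,b) := by
      intro a b haS hbS hab
      refine ⟨Nat.pair a (b - a - 1), ?_, ?_, ?_⟩
      · have haR : a < R := Finset.mem_range.1 (hSV haS)
        have hbR : b - a - 1 < R := by
          have := Finset.mem_range.1 (hSV hbS); omega
        have hmem : (a, b - a - 1) ∈ (Finset.range R) ×ˢ (Finset.range R) := by
          rw [Finset.mem_product, Finset.mem_range, Finset.mem_range]
          exact ⟨haR, hbR⟩
        have hle := Finset.le_sup (f := fun ab : ℕ × ℕ => Nat.pair ab.1 ab.2) hmem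
        simp only at hle
        omega
      · rw [histOf_length]
        exact enumEdge_pair a b hab
      · have hmin : a ⊓ b = a := inf_eq_left.2 hab.le
        have hmax : a ⊔ b = b := sup_eq_right.2 hab.le
        simp only [hχ, Sym2.lift_mk]
        rw [hmin, hmax]
    have key : ∀ (col : Bool) (k : ℕ),
        (S.card = k ∧ ∀ u ∈ S, ∀ v ∈ S, u ≠ v → χ s(u,v) = col) →
        HasMonoClique (fun t => enumEdge (histOf P t).length)
          (fun t => P (histOf P t)) N₀ k col := by
      rintro col k ⟨hcard, hmono⟩
      refine ⟨S, hcard, ?_⟩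
      intro u hu v hv huv
      rcases Ne.lt_or_gt huv with hlt | hlt
      · obtain ⟨t, h1, h2, h3⟩ := main u v hu hv hlt
        refine ⟨t, h1, h2, ?_⟩
        show P (histOf P t) = col
        rw [h3, hmono u hu v hv huv]
      · obtain ⟨t, h1, h2, h3⟩ := main v u hv hu hlt
        refine ⟨t, h1, ?_, ?_⟩
        · show enumEdge (histOf P t).length = s(u, v)
          rw [h2]; exact Sym2.eq_swap
        · show P (histOf P t) = col
          rw [h3, Sym2.eq_swap]
          exact hmono u hu v hv huv
    rcases hS with h | h
    · exact Or.inl (key true m h)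
    · exact Or.inr (key false n h)




lemma sum_cover {α β : Type*} [Fintype α] [Fintype β] (w : α → ℝ) (hw : ∀ a, 0 ≤ w a)
    (P : α → Prop) (A : β → α → Prop) (hcov : ∀ a, P a → ∃ s, A s a) :
    ∑ a, (if P a then w a else 0) ≤ ∑ s : β, ∑ a, (if A s a then w a else 0) := by
  rw [Finset.sum_comm]
  refine Finset.sum_le_sum ?_
  intro a _
  have hterm : ∀ s : β, (0:ℝ) ≤ (if A s a then w a else 0) := by
    intro s; split
    · exact hw a
    · exact le_rfl
  by_cases hP : P a
  · rw [if_pos hP]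
    obtain ⟨s0, hs0⟩ := hcov a hP
    calc w a = (if A s0 a then w a else 0) := (if_pos hs0).symm
      _ ≤ ∑ s : β, (if A s a then w a else 0) :=
          Finset.single_le_sum (fun s _ => hterm s) (Finset.mem_univ s0)
  · rw [if_neg hP]
    exact Finset.sum_nonneg (fun s _ => hterm s)

noncomputable def lov (z : Sym2 ℕ) : ℕ :=
  Sym2.lift ⟨fun a b => min a b, fun a b => min_comm a b⟩ z
noncomputable def hiv (z : Sym2 ℕ) : ℕ :=
  Sym2.lift ⟨fun a b => max a b, fun a b => max_comm a b⟩ z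

lemma lov_mem (z : Sym2 ℕ) : lov z ∈ z := by
  induction z using Sym2.inductionOn with
  | hf a b =>
      rw [lov, Sym2.lift_mk]
      show min a b ∈ s(a, b)
      rcases min_choice a b with h | h <;> rw [h]
      · exact Sym2.mem_mk_left a b
      · exact Sym2.mem_mk_right a b

lemma hiv_mem (z : Sym2 ℕ) : hiv z ∈ z := by
  induction z using Sym2.inductionOn with
  | hf a b =>
      rw [hiv, Sym2.lift_mk]
      show max a b ∈ s(a, b)
      rcases max_choice a b with h | h <;> rw [h]
      · exact Sym2.mem_mk_left a b
      · exact Sym2.mem_mk_right a b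

lemma eq_lov_or_hiv {z : Sym2 ℕ} {x : ℕ} (hx : x ∈ z) : x = lov z ∨ x = hiv z := by
  induction z using Sym2.inductionOn with
  | hf a b =>
      rw [lov, hiv, Sym2.lift_mk, Sym2.lift_mk]
      show x = min a b ∨ x = max a b
      rcases Sym2.mem_iff.1 hx with rfl | rfl
      · rcases le_total x b with h | h
        · left; exact (min_eq_left h).symm
        · right; exact (max_eq_left h).symm
      · rcases le_total a x with h | h
        · right; exact (max_eq_right h).symm
        · left; exact (min_eq_right h).symm

noncomputable def pick (z : Sym2 ℕ) (b : Bool) : ℕ := if b then hiv z else lov z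

lemma pick_mem (z : Sym2 ℕ) (b : Bool) : pick z b ∈ z := by
  rw [pick]; split
  · exact hiv_mem z
  · exact lov_mem z

lemma exists_pick {z : Sym2 ℕ} {x : ℕ} (hx : x ∈ z) : ∃ b, pick z b = x := by
  rcases eq_lov_or_hiv hx with h | h
  · exact ⟨false, h.symm⟩
  · exact ⟨true, h.symm⟩

/-- The canonical `Sym2` attached to a two-element finset. -/
noncomputable def sym2Of (e : Finset ℕ) : Sym2 ℕ :=
  if hne : e.Nonempty then s(e.min' hne, e.max' hne) else s(0,0)

lemma sym2Of_pair {u v : ℕ} (huv : u ≠ v) : sym2Of {u,v} = s(u,v) := by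
  have hne : ({u,v} : Finset ℕ).Nonempty := ⟨u, Finset.mem_insert_self _ _⟩
  rw [sym2Of, dif_pos hne]
  rcases le_total u v with h | h
  · rw [Finset.min'_eq_inf' , Finset.max'_eq_sup']
    have h1 : ({u,v} : Finset ℕ).inf' hne id = min u v := by
      simp [Finset.inf'_insert, min_comm]
    have h2 : ({u,v} : Finset ℕ).sup' hne id = max u v := by
      simp [Finset.sup'_insert, max_comm]
    rw [h1, h2, min_eq_left h, max_eq_right h]
  · rw [Finset.min'_eq_inf' , Finset.max'_eq_sup']
    have h1 : ({u,v} : Finset ℕ).inf' hne id = min u v := by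
      simp [Finset.inf'_insert, min_comm]
    have h2 : ({u,v} : Finset ℕ).sup' hne id = max u v := by
      simp [Finset.sup'_insert, max_comm]
    rw [h1, h2, min_eq_right h, max_eq_left h, Sym2.eq_swap]

lemma mem_sym2Of {e : Finset ℕ} (he : e.card = 2) {x : ℕ} :
    x ∈ sym2Of e ↔ x ∈ e := by
  obtain ⟨u, v, huv, rfl⟩ := Finset.card_eq_two.1 he
  rw [sym2Of_pair huv, Sym2.mem_iff]
  simp [Finset.mem_insert]

lemma sym2Of_not_isDiag {e : Finset ℕ} (he : e.card = 2) : ¬ (sym2Of e).IsDiag := by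
  obtain ⟨u, v, huv, rfl⟩ := Finset.card_eq_two.1 he
  rw [sym2Of_pair huv]
  rw [Sym2.mk_isDiag_iff]
  exact huv

lemma sym2Of_inj {e f : Finset ℕ} (he : e.card = 2) (hf : f.card = 2)
    (h : sym2Of e = sym2Of f) : e = f := by
  obtain ⟨u, v, huv, rfl⟩ := Finset.card_eq_two.1 he
  obtain ⟨a, b, hab, rfl⟩ := Finset.card_eq_two.1 hf
  rw [sym2Of_pair huv, sym2Of_pair hab, Sym2.eq_iff] at h
  rcases h with ⟨rfl, rfl⟩ | ⟨rfl, rfl⟩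
  · rfl
  · exact Finset.pair_comm _ _

section NoWin

variable {N : ℕ} (B : List Bool → Sym2 ℕ)

/-- The edge built at time `t` along full history `h`. -/
noncomputable def eAt (h : Fin N → Bool) (t : ℕ) : Sym2 ℕ := B ((List.ofFn h).take t)

/-- The color at time `t`. -/
def bit (h : Fin N → Bool) (t : ℕ) : Bool := if ht : t < N then h ⟨t, ht⟩ else false

/-- History `h` contains a monochromatic `m`-clique of color `col`. -/
def Win (m : ℕ) (col : Bool) (h : Fin N → Bool) : Prop :=
  ∃ S : Finset ℕ, S.card = m ∧
    ∀ u ∈ S, ∀ v ∈ S, u ≠ v → ∃ t, t < N ∧ eAt B h t = s(u,v) ∧ bit h t = col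

lemma eAt_inj (hB : ValidBuilder B) (h : Fin N → Bool) {t1 t2 : ℕ}
    (h1 : t1 < t2) (h2 : t2 ≤ N) : eAt B h t1 ≠ eAt B h t2 := by
  have hlen : ((List.ofFn h).take t2).length = t2 := by
    rw [List.length_take, List.length_ofFn]
    omega
  have := hB.2 ((List.ofFn h).take t2) t1 (by omega)
  rw [List.take_take] at this
  have hmin : min t1 t2 = t1 := by omega
  rw [hmin] at this
  exact this

variable (c k : ℕ)

/-- Vertices decoded by time `t` from the slot data `σ`. -/
def Known (σ : (Fin c → Fin N) × (Fin k → Fin N × Bool)) (h : Fin N → Bool) (t : Fin N) :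
    Set ℕ :=
  {x | (∃ j : Fin c, (σ.1 j : ℕ) ≤ (t : ℕ) ∧ x ∈ eAt B h (σ.1 j)) ∨
       (∃ i : Fin k, ((σ.2 i).1 : ℕ) ≤ (t : ℕ) ∧
          x = pick (eAt B h ((σ.2 i).1)) (σ.2 i).2)}

/-- The predictable set of required times. -/
noncomputable def Req (σ : (Fin c → Fin N) × (Fin k → Fin N × Bool)) (h : Fin N → Bool) :
    Finset (Fin N) :=
  Finset.univ.filter (fun t => ¬ (eAt B h t).IsDiag ∧
    ∀ x ∈ eAt B h t, x ∈ Known B c k σ h t)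

lemma take_agree {h h' : Fin N → Bool} {t : Fin N} (hag : ∀ s, s < t → h s = h' s)
    {u : ℕ} (hu : u ≤ (t : ℕ)) : (List.ofFn h).take u = (List.ofFn h').take u := by
  apply List.ext_getElem
  · simp
  · intro i hi1 hi2
    rw [List.getElem_take, List.getElem_take, List.getElem_ofFn, List.getElem_ofFn]
    have hiN : i < N := by
      rw [List.length_take, List.length_ofFn] at hi1
      omega
    have hit : (⟨i, hiN⟩ : Fin N) < t := by
      rw [Fin.lt_def]
      rw [List.length_take, List.length_ofFn] at hi1
      simp only
      omega
    exact hag ⟨i, hiN⟩ hit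

lemma Req_measurable (σ : (Fin c → Fin N) × (Fin k → Fin N × Bool))
    (g g' : Fin N → Bool) (t : Fin N) (hag : ∀ s, s < t → g s = g' s) :
    t ∈ Req B c k σ g ↔ t ∈ Req B c k σ g' := by
  have heq : ∀ u : ℕ, u ≤ (t : ℕ) → eAt B g u = eAt B g' u := by
    intro u hu
    rw [eAt, eAt, take_agree hag hu]
  have hKnown : Known B c k σ g t = Known B c k σ g' t := by
    rw [Known, Known]
    ext x
    constructor <;> rintro (⟨j, hj1, hj2⟩ | ⟨i, hi1, hi2⟩)
    · exact Or.inl ⟨j, hj1, (heq _ hj1) ▸ hj2⟩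
    · exact Or.inr ⟨i, hi1, (heq _ hi1) ▸ hi2⟩
    · exact Or.inl ⟨j, hj1, (heq _ hj1).symm ▸ hj2⟩
    · exact Or.inr ⟨i, hi1, (heq _ hi1).symm ▸ hi2⟩
  rw [Req, Req, Finset.mem_filter, Finset.mem_filter, heq t le_rfl, hKnown]

lemma lov_hiv_eq (z : Sym2 ℕ) : s(lov z, hiv z) = z := by
  induction z using Sym2.inductionOn with
  | hf a b =>
      rw [lov, hiv, Sym2.lift_mk, Sym2.lift_mk]
      show s(min a b, max a b) = s(a, b)
      rcases le_total a b with h | h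
      · rw [min_eq_left h, max_eq_right h]
      · rw [min_eq_right h, max_eq_left h, Sym2.eq_swap]

lemma lov_ne_hiv {z : Sym2 ℕ} (hz : ¬ z.IsDiag) : lov z ≠ hiv z := by
  induction z using Sym2.inductionOn with
  | hf a b =>
      rw [Sym2.mk_isDiag_iff] at hz
      rw [lov, hiv, Sym2.lift_mk, Sym2.lift_mk]
      show min a b ≠ max a b
      rcases le_total a b with h | h
      · rw [min_eq_left h, max_eq_right h]; exact hz
      · rw [min_eq_right h, max_eq_left h]; exact fun hba => hz (hba.symm)

lemma cover (hB : ValidBuilder B) (col : Bool) (m c : ℕ) (hm : 2 ≤ m) (h2c : 2*c ≤ m)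
    (h : Fin N → Bool) (hwin : Win B m col h) :
    ∃ σ : (Fin c → Fin N) × (Fin (m-2*c) → Fin N × Bool),
      (m.choose 2 - c*(c-1)) ≤ (Req B c (m-2*c) σ h).card ∧
      ∀ t ∈ Req B c (m-2*c) σ h, h t = col := by
  obtain ⟨S, hScard, hclique⟩ := hwin
  set P2S := S.powersetCard 2 with hP2S
  have hP2fact : ∀ e ∈ P2S, e.card = 2 ∧ e ⊆ S := fun e he =>
    ⟨(Finset.mem_powersetCard.1 he).2, (Finset.mem_powersetCard.1 he).1⟩
  have hP2Scard : P2S.card = m.choose 2 := by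
    rw [hP2S, Finset.card_powersetCard, hScard]
  -- another vertex of S
  have hother : ∀ v ∈ S, ∃ u ∈ S, u ≠ v := by
    intro v hv
    have h1 : 1 < S.card := by omega
    obtain ⟨a, ha, b, hb, hab⟩ := Finset.one_lt_card.1 h1
    by_cases hav : a = v
    · exact ⟨b, hb, fun hbv => hab (by rw [hav, hbv])⟩
    · exact ⟨a, ha, hav⟩
  -- N is positive
  have hN0 : 0 < N := by
    obtain ⟨a, ha, b, hb, hab⟩ := Finset.one_lt_card.1 (show 1 < S.card by omega)
    obtain ⟨t, ht, -, -⟩ := hclique a ha b hb hab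
    omega
  -- times of clique edges
  have hTimeEx : ∀ e : Finset ℕ, ∃ t : ℕ, e ∈ P2S →
      (t < N ∧ eAt B h t = sym2Of e ∧ bit h t = col) := by
    intro e
    by_cases he : e ∈ P2S
    · obtain ⟨hc2, hsub⟩ := hP2fact e he
      obtain ⟨u, v, huv, rfl⟩ := Finset.card_eq_two.1 hc2
      have hu : u ∈ S := hsub (Finset.mem_insert_self _ _)
      have hv : v ∈ S := hsub (Finset.mem_insert_of_mem (Finset.mem_singleton_self _))
      obtain ⟨t, ht1, ht2, ht3⟩ := hclique u hu v hv huv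
      exact ⟨t, fun _ => ⟨ht1, by rw [sym2Of_pair huv]; exact ht2, ht3⟩⟩
    · exact ⟨0, fun hmem => absurd hmem he⟩
  choose timeF htimeF using hTimeEx
  have hTlt : ∀ e ∈ P2S, timeF e < N := fun e he => (htimeF e he).1
  have hTE : ∀ e ∈ P2S, eAt B h (timeF e) = sym2Of e := fun e he => (htimeF e he).2.1
  have hTcol : ∀ e ∈ P2S, bit h (timeF e) = col := fun e he => (htimeF e he).2.2
  have hTinj : ∀ e ∈ P2S, ∀ f ∈ P2S, timeF e = timeF f → e = f := by
    intro e he f hf hef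
    apply sym2Of_inj (hP2fact e he).1 (hP2fact f hf).1
    rw [← hTE e he, ← hTE f hf, hef]
  have hTuniq : ∀ e ∈ P2S, ∀ t : ℕ, t < N → eAt B h t = sym2Of e → t = timeF e := by
    intro e he t ht hE
    by_contra hne
    rcases Nat.lt_or_ge t (timeF e) with hlt | hge
    · exact (eAt_inj B hB h hlt (le_of_lt (hTlt e he))) (hE.trans (hTE e he).symm)
    · have hlt : timeF e < t := by omega
      exact (eAt_inj B hB h hlt (le_of_lt ht)) ((hTE e he).trans hE.symm)
  -- the matching
  obtain ⟨M, hMsub, hMcard, hMdisj, hMex⟩ :=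
    matching_lemma S c (by omega) timeF hTinj
  -- first appearance times
  have hFAex : ∀ v : ℕ, ∃ t : ℕ, v ∈ S →
      (t < N ∧ v ∈ eAt B h t ∧ ∀ t', v ∈ eAt B h t' → t ≤ t') := by
    intro v
    by_cases hv : v ∈ S
    · obtain ⟨u, hu, hne⟩ := hother v hv
      obtain ⟨tw, htw1, htw2, -⟩ := hclique v hv u hu (fun h' => hne h'.symm)
      have hex : ∃ t, v ∈ eAt B h t := ⟨tw, by rw [htw2]; exact Sym2.mem_mk_left v u⟩
      refine ⟨Nat.find hex, fun _ => ⟨?_, Nat.find_spec hex, fun t' ht' => Nat.find_le ht'⟩⟩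
      have : Nat.find hex ≤ tw := Nat.find_le (by rw [htw2]; exact Sym2.mem_mk_left v u)
      omega
    · exact ⟨0, fun hmem => absurd hmem hv⟩
  choose faF hfaF using hFAex
  have hFAlt : ∀ v ∈ S, faF v < N := fun v hv => (hfaF v hv).1
  have hFAmem : ∀ v ∈ S, v ∈ eAt B h (faF v) := fun v hv => (hfaF v hv).2.1
  have hFAmin : ∀ v ∈ S, ∀ t', v ∈ eAt B h t' → faF v ≤ t' := fun v hv => (hfaF v hv).2.2
  -- sides
  have hSideEx : ∀ v : ℕ, ∃ b : Bool, v ∈ S → pick (eAt B h (faF v)) b = v := by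
    intro v
    by_cases hv : v ∈ S
    · obtain ⟨b, hb⟩ := exists_pick (hFAmem v hv)
      exact ⟨b, fun _ => hb⟩
    · exact ⟨false, fun hmem => absurd hmem hv⟩
  choose sideF hsideF using hSideEx
  -- unmatched vertices
  set U := S \ M.biUnion id with hU
  have hMelt : ∀ f ∈ M, f.card = 2 ∧ f ⊆ S := fun f hf => hP2fact f (hMsub hf)
  have hUcard : U.card = m - 2*c := by
    have hbsub : M.biUnion id ⊆ S := by
      intro x hx
      obtain ⟨f, hf, hxf⟩ := Finset.mem_biUnion.1 hx
      exact (hMelt f hf).2 hxf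
    have hbU : (M.biUnion id).card = 2*c := by
      rw [Finset.card_biUnion]
      · calc ∑ f ∈ M, (id f : Finset ℕ).card
            = ∑ _f ∈ M, 2 := Finset.sum_congr rfl (fun f hf => (hMelt f hf).1)
          _ = 2 * c := by rw [Finset.sum_const, hMcard, smul_eq_mul, mul_comm]
      · intro f hf g hg hfg
        exact hMdisj f hf g hg hfg
    rw [hU, Finset.card_sdiff_of_subset hbsub, hScard, hbU]
  obtain ⟨eMf, hMmemf, hMcov⟩ : ∃ eMf : Fin c → Finset ℕ,
      (∀ j, eMf j ∈ M) ∧ (∀ f ∈ M, ∃ j, eMf j = f) := by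
    refine ⟨fun j => (M.equivFin.symm (Fin.cast hMcard.symm j)).1,
      fun j => (M.equivFin.symm _).2, ?_⟩
    intro f hf
    refine ⟨Fin.cast hMcard (M.equivFin ⟨f, hf⟩), ?_⟩
    simp
  obtain ⟨eUf, hUmemf, hUcov⟩ : ∃ eUf : Fin (m-2*c) → ℕ,
      (∀ i, eUf i ∈ U) ∧ (∀ v ∈ U, ∃ i, eUf i = v) := by
    refine ⟨fun i => (U.equivFin.symm (Fin.cast hUcard.symm i)).1,
      fun i => (U.equivFin.symm _).2, ?_⟩
    intro v hv
    refine ⟨Fin.cast hUcard (U.equivFin ⟨v, hv⟩), ?_⟩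
    simp
  have hUS : ∀ x ∈ U, x ∈ S := fun x hx => (Finset.mem_sdiff.1 hx).1
  -- the slots
  refine ⟨(fun j => ⟨timeF (eMf j), hTlt _ (hMsub (hMmemf j))⟩,
           fun i => (⟨faF (eUf i), hFAlt _ (hUS _ (hUmemf i))⟩, sideF (eUf i))), ?_, ?_⟩
  case refine_2 =>
    -- every required time is a clique-edge time, hence has color col
    intro t ht
    rw [Req, Finset.mem_filter] at ht
    obtain ⟨-, hdiag, hknown⟩ := ht
    set z := eAt B h (t : ℕ) with hz
    have hKS : ∀ x ∈ z, x ∈ S := by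
      intro x hx
      rcases hknown x hx with ⟨j, hj1, hj2⟩ | ⟨i, hi1, hi2⟩
      · have hfj : eMf j ∈ P2S := hMsub (hMmemf j)
        have hj2' : x ∈ eAt B h (timeF (eMf j)) := hj2
        rw [hTE _ hfj] at hj2'
        exact (hP2fact _ hfj).2 ((mem_sym2Of (hP2fact _ hfj).1).1 hj2')
      · have hvS : eUf i ∈ S := hUS _ (hUmemf i)
        have hi2' : x = pick (eAt B h (faF (eUf i))) (sideF (eUf i)) := hi2
        rw [hsideF _ hvS] at hi2'
        rw [hi2']
        exact hvS
    have hlovS : lov z ∈ S := hKS _ (lov_mem z)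
    have hhivS : hiv z ∈ S := hKS _ (hiv_mem z)
    have hne : lov z ≠ hiv z := lov_ne_hiv hdiag
    have heP2 : ({lov z, hiv z} : Finset ℕ) ∈ P2S := by
      rw [hP2S, Finset.mem_powersetCard]
      constructor
      · intro x hx
        rcases Finset.mem_insert.1 hx with rfl | hx
        · exact hlovS
        · rw [Finset.mem_singleton.1 hx]; exact hhivS
      · exact Finset.card_pair hne
    have hzE : eAt B h (t : ℕ) = sym2Of {lov z, hiv z} := by
      rw [sym2Of_pair hne, ← hz, lov_hiv_eq]
    have ht' : (t : ℕ) = timeF {lov z, hiv z} := hTuniq _ heP2 _ t.isLt hzE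
    have hcol := hTcol _ heP2
    rw [← ht'] at hcol
    rw [bit, dif_pos t.isLt] at hcol
    rw [← hcol]
  case refine_1 =>
    -- counting required times
    set σ : (Fin c → Fin N) × (Fin (m-2*c) → Fin N × Bool) :=
      (fun j => ⟨timeF (eMf j), hTlt _ (hMsub (hMmemf j))⟩,
       fun i => (⟨faF (eUf i), hFAlt _ (hUS _ (hUmemf i))⟩, sideF (eUf i))) with hσ
    set goodE := M ∪ ((P2S \ M).filter
      (fun e => ¬ ∃ f ∈ M, ¬ Disjoint e f ∧ timeF e < timeF f)) with hgoodE
    have hgoodP2 : goodE ⊆ P2S := by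
      intro e he
      rcases Finset.mem_union.1 he with he | he
      · exact hMsub he
      · exact (Finset.mem_sdiff.1 (Finset.mem_filter.1 he).1).1
    have hσ1 : ∀ j, ((σ.1 j : ℕ)) = timeF (eMf j) := fun j => rfl
    have hσ2a : ∀ i, (((σ.2 i).1 : ℕ)) = faF (eUf i) := fun i => rfl
    have hσ2b : ∀ i, (σ.2 i).2 = sideF (eUf i) := fun i => rfl
    have hmemReq : ∀ e, ∀ he : e ∈ goodE,
        (⟨timeF e, hTlt e (hgoodP2 he)⟩ : Fin N) ∈ Req B c (m-2*c) σ h := by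
      intro e he
      have heP2 : e ∈ P2S := hgoodP2 he
      rw [Req, Finset.mem_filter]
      refine ⟨Finset.mem_univ _, ?_, ?_⟩
      · show ¬ (eAt B h (timeF e)).IsDiag
        rw [hTE e heP2]
        exact sym2Of_not_isDiag (hP2fact e heP2).1
      · intro x hx
        have hx' : x ∈ eAt B h (timeF e) := hx
        rw [hTE e heP2] at hx'
        have hxe : x ∈ e := (mem_sym2Of (hP2fact e heP2).1).1 hx'
        have hxS : x ∈ S := (hP2fact e heP2).2 hxe
        show x ∈ Known B c (m-2*c) σ h ⟨timeF e, hTlt e heP2⟩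
        rcases Finset.mem_union.1 he with heM | heF
        · obtain ⟨j, hj⟩ := hMcov e heM
          refine Or.inl ⟨j, ?_, ?_⟩
          · rw [hσ1 j, hj]
          · rw [hσ1 j, hj, hTE e heP2]
            exact (mem_sym2Of (hP2fact e heP2).1).2 hxe
        · have hnotexc := (Finset.mem_filter.1 heF).2
          push_neg at hnotexc
          by_cases hxM : ∃ f ∈ M, x ∈ f
          · obtain ⟨f, hfM, hxf⟩ := hxM
            obtain ⟨j, hj⟩ := hMcov f hfM
            have hconf : ¬ Disjoint e f := fun hd => (Finset.disjoint_left.1 hd) hxe hxf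
            have hle : timeF f ≤ timeF e := hnotexc f hfM hconf
            refine Or.inl ⟨j, ?_, ?_⟩
            · rw [hσ1 j, hj]; exact hle
            · rw [hσ1 j, hj, hTE f (hMsub hfM)]
              exact (mem_sym2Of (hP2fact f (hMsub hfM)).1).2 hxf
          · have hxU : x ∈ U := by
              rw [hU, Finset.mem_sdiff]
              refine ⟨hxS, fun hmem => ?_⟩
              obtain ⟨f, hf, hxf⟩ := Finset.mem_biUnion.1 hmem
              exact hxM ⟨f, hf, hxf⟩
            obtain ⟨i, hi⟩ := hUcov x hxU
            refine Or.inr ⟨i, ?_, ?_⟩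
            · rw [hσ2a i, hi]
              exact hFAmin x hxS _
                (by rw [hTE e heP2]; exact (mem_sym2Of (hP2fact e heP2).1).2 hxe)
            · rw [hσ2a i, hσ2b i, hi, hsideF _ hxS]
    -- counting
    rw [← hP2S] at hMex
    have himg : (goodE.attach.image
        (fun e => (⟨timeF e.1, hTlt e.1 (hgoodP2 e.2)⟩ : Fin N)))
        ⊆ Req B c (m-2*c) σ h := by
      intro t ht
      obtain ⟨e, -, rfl⟩ := Finset.mem_image.1 ht
      exact hmemReq e.1 e.2
    have hcardimg : (goodE.attach.image
        (fun e => (⟨timeF e.1, hTlt e.1 (hgoodP2 e.2)⟩ : Fin N))).card = goodE.card := by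
      rw [Finset.card_image_of_injOn, Finset.card_attach]
      intro e _ f _ hef
      have hval : timeF e.1 = timeF f.1 := congrArg Fin.val hef
      exact Subtype.ext (hTinj e.1 (hgoodP2 e.2) f.1 (hgoodP2 f.2) hval)
    have hdisjU : Disjoint M ((P2S \ M).filter
        (fun e => ¬ ∃ f ∈ M, ¬ Disjoint e f ∧ timeF e < timeF f)) := by
      rw [Finset.disjoint_right]
      intro e he
      exact (Finset.mem_sdiff.1 (Finset.mem_filter.1 he).1).2
    have hcard1 : goodE.card = c + ((P2S \ M).filter
        (fun e => ¬ ∃ f ∈ M, ¬ Disjoint e f ∧ timeF e < timeF f)).card := by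
      rw [hgoodE, Finset.card_union_of_disjoint hdisjU, hMcard]
    have hcard2 := Finset.card_filter_add_card_filter_not
      (s := P2S \ M) (p := fun e => ∃ f ∈ M, ¬ Disjoint e f ∧ timeF e < timeF f)
    have hcard3 : (P2S \ M).card = m.choose 2 - c := by
      rw [Finset.card_sdiff_of_subset (by rw [hP2S]; exact hMsub), hP2Scard, hMcard]
    have hcle : c ≤ m.choose 2 := by
      calc c ≤ M.card := le_of_eq hMcard.symm
        _ ≤ P2S.card := Finset.card_le_card (by rw [hP2S]; exact hMsub)
        _ = m.choose 2 := hP2Scard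
    have hfinal := Finset.card_le_card himg
    rw [hcardimg] at hfinal
    omega

set_option maxHeartbeats 1000000 in
lemma win_bound (hB : ValidBuilder B) {p : ℝ} (hp0 : 0 ≤ p) (hp1 : p ≤ 1) (col : Bool)
    (m c : ℕ) (hm : 2 ≤ m) (h2c : 2*c ≤ m) :
    ∑ h : Fin N → Bool, (if Win B m col h then wt p h else 0)
      ≤ ((N:ℝ)^c * ((2*N : ℕ):ℝ)^(m - 2*c)) *
        (if col then p else 1 - p) ^ (m.choose 2 - c*(c-1)) := by
  classical
  have hmart : ∀ σ : (Fin c → Fin N) × (Fin (m-2*c) → Fin N × Bool),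
      ∑ h : Fin N → Bool, (if (m.choose 2 - c*(c-1)) ≤ (Req B c (m-2*c) σ h).card ∧
          (∀ t ∈ Req B c (m-2*c) σ h, h t = col) then wt p h else 0)
        ≤ (if col then p else 1 - p) ^ (m.choose 2 - c*(c-1)) := by
    intro σ
    exact martingale hp0 hp1 col N (m.choose 2 - c*(c-1)) (Req B c (m-2*c) σ)
      (fun g g' t hag => Req_measurable B c (m-2*c) σ g g' t hag)
  have hwnn : ∀ h : Fin N → Bool, 0 ≤ wt p h :=
    fun h => Finset.prod_nonneg (fun t _ => by split <;> linarith)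
  calc ∑ h : Fin N → Bool, (if Win B m col h then wt p h else 0)
      ≤ ∑ σ : (Fin c → Fin N) × (Fin (m-2*c) → Fin N × Bool),
          ∑ h : Fin N → Bool, (if (m.choose 2 - c*(c-1)) ≤ (Req B c (m-2*c) σ h).card ∧
            (∀ t ∈ Req B c (m-2*c) σ h, h t = col) then wt p h else 0) :=
        by
        refine le_trans
          (sum_cover (wt p) hwnn _ _ (fun h hwin => cover B hB col m c hm h2c h hwin))
          (le_of_eq ?_)
        refine Finset.sum_congr rfl (fun σ _ => Finset.sum_congr rfl (fun h _ => ?_))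
        congr 1
    _ ≤ ∑ _σ : (Fin c → Fin N) × (Fin (m-2*c) → Fin N × Bool),
          (if col then p else 1 - p) ^ (m.choose 2 - c*(c-1)) :=
        Finset.sum_le_sum (fun σ _ => hmart σ)
    _ = ((N:ℝ)^c * ((2*N : ℕ):ℝ)^(m - 2*c)) *
        (if col then p else 1 - p) ^ (m.choose 2 - c*(c-1)) := by
        rw [Finset.sum_const, Finset.card_univ]
        have hcard : Fintype.card ((Fin c → Fin N) × (Fin (m-2*c) → Fin N × Bool))
            = N^c * (2*N)^(m-2*c) := by
          simp [Fintype.card_fun, mul_comm]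
        rw [hcard, nsmul_eq_mul]
        push_cast
        ring

/-- The Painter strategy following a fixed history. -/
def painterOf (h : Fin N → Bool) : List Bool → Bool :=
  fun g => if hg : g.length < N then h ⟨g.length, hg⟩ else false

lemma histOf_painterOf (h : Fin N → Bool) :
    ∀ t, t ≤ N → histOf (painterOf h) t = (List.ofFn h).take t := by
  intro t
  induction t with
  | zero => intro _; rfl
  | succ t ih =>
      intro ht
      have htN : t < N := by omega
      rw [histOf, ih (by omega)]
      have hlen : ((List.ofFn h).take t).length = t := by
        rw [List.length_take, List.length_ofFn]; omega
      have hP : painterOf h ((List.ofFn h).take t) = h ⟨t, htN⟩ := by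
        rw [painterOf]
        simp only [hlen]
        rw [dif_pos htN]
      rw [hP]
      rw [List.take_succ]
      congr 1
      have hlen2 : t < (List.ofFn h).length := by rw [List.length_ofFn]; omega
      rw [List.getElem?_eq_getElem hlen2]
      simp

set_option maxHeartbeats 1000000 in
lemma not_builderWins {m n : ℕ} {p : ℝ} (hp0 : 0 < p) (hp1 : p < 1)
    (c d : ℕ) (hm : 2 ≤ m) (hn : 2 ≤ n) (h2c : 2*c ≤ m) (h2d : 2*d ≤ n)
    (hbound : ((N:ℝ)^c * ((2*N : ℕ):ℝ)^(m - 2*c)) * p ^ (m.choose 2 - c*(c-1)) +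
        ((N:ℝ)^d * ((2*N : ℕ):ℝ)^(n - 2*d)) * (1-p) ^ (n.choose 2 - d*(d-1)) < 1) :
    ¬ BuilderWins m n N := by
  rintro ⟨B, hBvalid, hBwin⟩
  -- each full history yields a win for Builder
  have hwin : ∀ h : Fin N → Bool, Win B m true h ∨ Win B n false h := by
    intro h
    have hconv : ∀ (k : ℕ) (col : Bool),
        HasMonoClique (fun t => B (histOf (painterOf h) t))
          (fun t => painterOf h (histOf (painterOf h) t)) N k col → Win B k col h := by
      rintro k col ⟨S, hcard, hmono⟩
      refine ⟨S, hcard, ?_⟩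
      intro u hu v hv huv
      obtain ⟨t, ht, hE, hcol⟩ := hmono u hu v hv huv
      refine ⟨t, ht, ?_, ?_⟩
      · have hE' : B (histOf (painterOf h) t) = s(u,v) := hE
        rw [eAt, ← histOf_painterOf h t (le_of_lt ht)]
        exact hE'
      · have hcol' : painterOf h (histOf (painterOf h) t) = col := hcol
        have hPh : ∀ (g : List Bool), g.length = t → painterOf h g = h ⟨t, ht⟩ := by
          intro g hg
          subst hg
          rw [painterOf, dif_pos]
        have hlen : (histOf (painterOf h) t).length = t := by
          rw [histOf_painterOf h t (le_of_lt ht), List.length_take, List.length_ofFn]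
          omega
        rw [bit, dif_pos ht, ← hPh _ hlen, hcol']
    rcases hBwin (painterOf h) with hw | hw
    · exact Or.inl (hconv m true hw)
    · exact Or.inr (hconv n false hw)
  -- total weight is 1 but bounded by the two win events
  have h1 : (1:ℝ) = ∑ h : Fin N → Bool, wt p h := (sum_wt N).symm
  have hsplit : ∑ h : Fin N → Bool, wt p h ≤
      ∑ h : Fin N → Bool, (if Win B m true h then wt p h else 0) +
      ∑ h : Fin N → Bool, (if Win B n false h then wt p h else 0) := by
    rw [← Finset.sum_add_distrib]
    refine Finset.sum_le_sum ?_
    intro h _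
    have hwnn : 0 ≤ wt p h := Finset.prod_nonneg (fun t _ => by split <;> linarith)
    rcases hwin h with hw | hw
    · rw [if_pos hw]
      have : (0:ℝ) ≤ (if Win B n false h then wt p h else 0) := by
        split
        · exact hwnn
        · exact le_rfl
      linarith
    · rw [if_pos hw]
      have : (0:ℝ) ≤ (if Win B m true h then wt p h else 0) := by
        split
        · exact hwnn
        · exact le_rfl
      linarith
  have hred := win_bound (N := N) B hBvalid (le_of_lt hp0) (le_of_lt hp1) true m c hm h2c
  have hblue := win_bound (N := N) B hBvalid (le_of_lt hp0) (le_of_lt hp1) false n d hn h2d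
  rw [if_pos rfl] at hred
  rw [if_neg (by simp)] at hblue
  linarith

end NoWin



section Assembly

lemma builderWins_mono {m n N1 N2 : ℕ} (hle : N1 ≤ N2) (h : BuilderWins m n N1) :
    BuilderWins m n N2 := by
  obtain ⟨B, hBv, hBw⟩ := h
  refine ⟨B, hBv, fun P => ?_⟩
  rcases hBw P with ⟨S, hS1, hS2⟩ | ⟨S, hS1, hS2⟩
  · refine Or.inl ⟨S, hS1, fun u hu v hv huv => ?_⟩
    obtain ⟨t, ht, h2, h3⟩ := hS2 u hu v hv huv
    exact ⟨t, lt_of_lt_of_le ht hle, h2, h3⟩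
  · refine Or.inr ⟨S, hS1, fun u hu v hv huv => ?_⟩
    obtain ⟨t, ht, h2, h3⟩ := hS2 u hu v hv huv
    exact ⟨t, lt_of_lt_of_le ht hle, h2, h3⟩

end Assembly

theorem stmt0 (m n N : ℕ) (hm : 1 ≤ m) (hn : 1 ≤ n) (hN : 1 ≤ N)
    (h : ∃ (p : ℝ) (c d : ℕ), p ∈ Set.Ioo (0 : ℝ) 1 ∧
      (c : ℝ) ≤ (m : ℝ) / 2 ∧ (d : ℝ) ≤ (n : ℝ) / 2 ∧
      p ^ ((m.choose 2 : ℝ) - (c : ℝ) * ((c : ℝ) - 1)) * ((2 * N : ℕ) : ℝ) ^ ((m : ℝ) - (c : ℝ)) +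
        (1 - p) ^ ((n.choose 2 : ℝ) - (d : ℝ) * ((d : ℝ) - 1)) *
          ((2 * N : ℕ) : ℝ) ^ ((n : ℝ) - (d : ℝ)) ≤ 1 / 2) :
    N < onlineRamsey m n := by
  obtain ⟨p, c, d, ⟨hp0, hp1⟩, hc, hd, hsum⟩ := h
  have h2N1 : (1:ℝ) ≤ ((2*N : ℕ) : ℝ) := by
    have : (2:ℕ) ≤ 2*N := by omega
    calc (1:ℝ) ≤ ((2:ℕ):ℝ) := by norm_num
      _ ≤ ((2*N:ℕ):ℝ) := by exact_mod_cast this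
  have h2N2 : (2:ℝ) ≤ ((2*N : ℕ) : ℝ) := by
    have : (2:ℕ) ≤ 2*N := by omega
    exact_mod_cast this
  have h2N0 : (0:ℝ) ≤ ((2*N : ℕ) : ℝ) := by linarith
  have hq0 : (0:ℝ) ≤ 1 - p := by linarith
  -- generic: a term of this shape is nonnegative
  have hterm_nonneg : ∀ (x : ℝ) (a b : ℝ), 0 ≤ x →
      (0:ℝ) ≤ x ^ a * ((2*N : ℕ) : ℝ) ^ b := by
    intro x a b hx
    exact mul_nonneg (Real.rpow_nonneg hx a) (Real.rpow_nonneg h2N0 b)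
  -- rule out m = 1
  have hm2 : 2 ≤ m := by
    by_contra hm1
    have hm1' : m = 1 := by omega
    have hc0 : c = 0 := by
      by_contra hc0
      have h1c : (1:ℝ) ≤ (c:ℝ) := by
        exact_mod_cast Nat.one_le_iff_ne_zero.2 hc0
      rw [hm1'] at hc
      norm_num at hc
      linarith
    rw [hm1', hc0] at hsum
    have hch : (Nat.choose 1 2 : ℝ) = 0 := by norm_num [Nat.choose]
    rw [hch] at hsum
    norm_num at hsum
    have hb0 : (0:ℝ) ≤ (1 - p) ^ ((n.choose 2 : ℝ) - (d : ℝ) * ((d : ℝ) - 1)) *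
        (2 * (N:ℝ)) ^ ((n:ℝ) - (d:ℝ)) :=
      mul_nonneg (Real.rpow_nonneg hq0 _) (Real.rpow_nonneg (by positivity) _)
    have hN1 : (1:ℝ) ≤ (N:ℝ) := by exact_mod_cast hN
    linarith
  -- rule out n = 1
  have hn2 : 2 ≤ n := by
    by_contra hn1
    have hn1' : n = 1 := by omega
    have hd0 : d = 0 := by
      by_contra hd0
      have h1d : (1:ℝ) ≤ (d:ℝ) := by
        exact_mod_cast Nat.one_le_iff_ne_zero.2 hd0
      rw [hn1'] at hd
      norm_num at hd
      linarith
    rw [hn1', hd0] at hsum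
    have hch : (Nat.choose 1 2 : ℝ) = 0 := by norm_num [Nat.choose]
    rw [hch] at hsum
    norm_num at hsum
    have hb0 : (0:ℝ) ≤ p ^ ((m.choose 2 : ℝ) - (c : ℝ) * ((c : ℝ) - 1)) *
        (2 * (N:ℝ)) ^ ((m:ℝ) - (c:ℝ)) :=
      mul_nonneg (Real.rpow_nonneg (le_of_lt hp0) _) (Real.rpow_nonneg (by positivity) _)
    have hN1 : (1:ℝ) ≤ (N:ℝ) := by exact_mod_cast hN
    linarith
  -- integer bounds
  have h2c : 2*c ≤ m := by
    have : ((2*c : ℕ):ℝ) ≤ (m:ℝ) := by push_cast; linarith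
    exact_mod_cast this
  have h2d : 2*d ≤ n := by
    have : ((2*d : ℕ):ℝ) ≤ (n:ℝ) := by push_cast; linarith
    exact_mod_cast this
  -- choose-bound
  have hccm : c*(c-1) ≤ m.choose 2 := by
    have h1 : m.choose 2 = m*(m-1)/2 := Nat.choose_two_right m
    have h2 : 2*c*(c-1) ≤ m*(m-1) := Nat.mul_le_mul h2c (by omega)
    have h3 : c*(c-1)*2 = 2*c*(c-1) := by ring
    rw [h1, Nat.le_div_iff_mul_le (by norm_num : 0 < 2), h3]
    exact h2
  have hddn : d*(d-1) ≤ n.choose 2 := by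
    have h1 : n.choose 2 = n*(n-1)/2 := Nat.choose_two_right n
    have h2 : 2*d*(d-1) ≤ n*(n-1) := Nat.mul_le_mul h2d (by omega)
    have h3 : d*(d-1)*2 = 2*d*(d-1) := by ring
    rw [h1, Nat.le_div_iff_mul_le (by norm_num : 0 < 2), h3]
    exact h2
  -- convert rpow to monoid powers
  have hcast : ∀ cc : ℕ, (cc:ℝ)*((cc:ℝ)-1) = ((cc*(cc-1) : ℕ) : ℝ) := by
    intro cc
    cases cc with
    | zero => simp
    | succ k => push_cast [Nat.succ_sub_one]; ring
  have hexp1 : (m.choose 2 : ℝ) - (c:ℝ)*((c:ℝ)-1) = ((m.choose 2 - c*(c-1) : ℕ) : ℝ) := by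
    rw [hcast c, ← Nat.cast_sub hccm]
  have hexp2 : (m:ℝ) - (c:ℝ) = ((m - c : ℕ) : ℝ) := by
    rw [← Nat.cast_sub (by omega)]
  have hexp3 : (n.choose 2 : ℝ) - (d:ℝ)*((d:ℝ)-1) = ((n.choose 2 - d*(d-1) : ℕ) : ℝ) := by
    rw [hcast d, ← Nat.cast_sub hddn]
  have hexp4 : (n:ℝ) - (d:ℝ) = ((n - d : ℕ) : ℝ) := by
    rw [← Nat.cast_sub (by omega)]
  rw [hexp1, hexp2, hexp3, hexp4, Real.rpow_natCast, Real.rpow_natCast,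
    Real.rpow_natCast, Real.rpow_natCast] at hsum
  -- compare the counting factors
  have hNle : ∀ cc : ℕ, 2*cc ≤ m ∨ 2*cc ≤ n →
      (N:ℝ)^cc * ((2*N:ℕ):ℝ)^(m-2*cc) ≤ ((2*N:ℕ):ℝ)^(m-cc) → True := fun _ _ _ => trivial
  have hfac : ∀ (k : ℕ) (cc : ℕ), 2*cc ≤ k →
      (N:ℝ)^cc * ((2*N:ℕ):ℝ)^(k-2*cc) ≤ ((2*N:ℕ):ℝ)^(k-cc) := by
    intro k cc hck
    have hNle2 : (N:ℝ) ≤ ((2*N:ℕ):ℝ) := by push_cast; linarith [Nat.cast_nonneg (α := ℝ) N]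
    calc (N:ℝ)^cc * ((2*N:ℕ):ℝ)^(k-2*cc)
        ≤ ((2*N:ℕ):ℝ)^cc * ((2*N:ℕ):ℝ)^(k-2*cc) := by
          apply mul_le_mul_of_nonneg_right
          · exact pow_le_pow_left₀ (Nat.cast_nonneg N) hNle2 cc
          · exact pow_nonneg h2N0 _
      _ = ((2*N:ℕ):ℝ)^(k-cc) := by
          rw [← pow_add]
          congr 1
          omega
  have hpK : (0:ℝ) ≤ p ^ (m.choose 2 - c*(c-1)) := pow_nonneg (le_of_lt hp0) _
  have hqK : (0:ℝ) ≤ (1-p) ^ (n.choose 2 - d*(d-1)) := pow_nonneg hq0 _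
  have hred : ((N:ℝ)^c * ((2*N : ℕ):ℝ)^(m - 2*c)) * p ^ (m.choose 2 - c*(c-1)) ≤
      p ^ (m.choose 2 - c*(c-1)) * ((2*N:ℕ):ℝ)^(m-c) := by
    rw [mul_comm]
    exact mul_le_mul_of_nonneg_left (hfac m c h2c) hpK
  have hblue : ((N:ℝ)^d * ((2*N : ℕ):ℝ)^(n - 2*d)) * (1-p) ^ (n.choose 2 - d*(d-1)) ≤
      (1-p) ^ (n.choose 2 - d*(d-1)) * ((2*N:ℕ):ℝ)^(n-d) := by
    rw [mul_comm]
    exact mul_le_mul_of_nonneg_left (hfac n d h2d) hqK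
  have hbound : ((N:ℝ)^c * ((2*N : ℕ):ℝ)^(m - 2*c)) * p ^ (m.choose 2 - c*(c-1)) +
      ((N:ℝ)^d * ((2*N : ℕ):ℝ)^(n - 2*d)) * (1-p) ^ (n.choose 2 - d*(d-1)) < 1 := by
    linarith
  have hnot : ¬ BuilderWins m n N :=
    not_builderWins (N := N) hp0 hp1 c d hm2 hn2 h2c h2d hbound
  obtain ⟨N₀, hN₀⟩ := builder_wins_eventually m n
  rw [onlineRamsey]
  by_contra hcon
  push_neg at hcon
  have hne : {N' | BuilderWins m n N'}.Nonempty := ⟨N₀, hN₀⟩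
  have hmem := Nat.sInf_mem hne
  exact hnot (builderWins_mono hcon hmem)

end OnlineRamseyGame
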